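/- arXiv:2005.12909 — 2 statements merged into one kernel-verified Lean document; each statement's English description precedes it below -/
import Mathlib

section
/- Let G be an n-vertex Class 2 simple graph with maximum degree Δ having a full-deficiency pair (a,b) such that ab is a critical edge of G. Then for every vertex x ∈ V(G) ∖ {a,b} with dist_G(x,{a,b}) = 2, we have d_G(x) ≥ Δ−1; furthermore, if d_G(a) < Δ and d_G(b) < Δ, then d_G(x) = Δ. -/
/-- `c` is a proper edge coloring of `G` using colors in `{1, …, k}`:
every edge gets a color in `[1,k]`, and distinct edges sharing an endpoint
get distinct colors. -/
def IsEdgeColoring {V : Type*} (G : SimpleGraph V) (k : ℕ) (c : Sym2 V → ℕ) : Prop :=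
  (∀ e ∈ G.edgeSet, 1 ≤ c e ∧ c e ≤ k) ∧
    ∀ e ∈ G.edgeSet, ∀ f ∈ G.edgeSet, e ≠ f → (∃ v, v ∈ e ∧ v ∈ f) → c e ≠ c f

/-- The chromatic index `χ'(G)`: the least `k` admitting a proper edge `k`-coloring. -/
noncomputable def chromIndex {V : Type*} (G : SimpleGraph V) : ℕ :=
  sInf {k | ∃ c, IsEdgeColoring G k c}

/-- An edge `e` of `G` is critical if `χ'(G-e) < χ'(G)`. -/
def IsCriticalEdge {V : Type*} (G : SimpleGraph V) (e : Sym2 V) : Prop :=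
  e ∈ G.edgeSet ∧ chromIndex (G.deleteEdges {e}) < chromIndex G

/-- The set of colors of `[1,k]` missing at `v` under the coloring `c` of `G`. -/
def missingColors {V : Type*} (G : SimpleGraph V) (k : ℕ) (c : Sym2 V → ℕ) (v : V) : Set ℕ :=
  {α | 1 ≤ α ∧ α ≤ k ∧ ∀ e ∈ G.edgeSet, v ∈ e → c e ≠ α}

/-- `G` is `Δ`-critical: `Δ` is the maximum degree of `G`, `χ'(G) = Δ+1`, and every
proper subgraph has chromatic index less than `Δ+1`. -/
def IsDeltaCritical {V : Type*} [Fintype V] (G : SimpleGraph V) [DecidableRel G.Adj]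
    (Δ : ℕ) : Prop :=
  G.maxDegree = Δ ∧ chromIndex G = Δ + 1 ∧
    ∀ H : SimpleGraph V, H ≤ G → H ≠ G → chromIndex H < Δ + 1

/-- A Kierstead path `(v₀, v₀v₁, v₁, …, v_{p-1}v_p, v_p)` with respect to the edge
`v₀v₁` and a `k`-coloring `c` of `G - v₀v₁`, encoded by the list `P = [v₀, …, v_p]`. -/
structure IsKiersteadPath {V : Type*} (G : SimpleGraph V) (k : ℕ) (c : Sym2 V → ℕ)
    (P : List V) : Prop where
  two_le : 2 ≤ P.length
  nodup : P.Nodup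
  adj : ∀ (i : ℕ) (h : i + 1 < P.length), G.Adj (P[i]'(by omega)) (P[i+1]'h)
  color : ∀ (i : ℕ) (h : i + 1 < P.length), 1 ≤ i →
      ∃ (j : ℕ) (_ : j ≤ i),
        c (s(P[i]'(by omega), P[i+1]'h)) ∈
          missingColors (G.deleteEdges {s(P[0]'(by omega), P[1]'(by omega))}) k c
            (P[j]'(by omega))

/-- A multifan centered at `r` with respect to the edge `r s₁` and a `k`-coloring `c` of
`G - r s₁`, encoded by `r` and the list `sl = [s₁, …, s_p]`. -/
structure IsMultifan {V : Type*} (G : SimpleGraph V) (k : ℕ) (c : Sym2 V → ℕ)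
    (r : V) (sl : List V) : Prop where
  one_le : 1 ≤ sl.length
  nodup : (r :: sl).Nodup
  adj : ∀ (i : ℕ) (h : i < sl.length), G.Adj r (sl[i]'h)
  color : ∀ (i : ℕ) (h : i < sl.length), 1 ≤ i →
      ∃ (j : ℕ) (_ : j < i),
        c (s(r, sl[i]'h)) ∈
          missingColors (G.deleteEdges {s(r, sl[0]'(by omega))}) k c
            (sl[j]'(by omega))

/-- The subgraph of `G` whose edges are the edges colored `α` or `β` by `c`;
its components are the `(α,β)`-chains. -/
def chainGraph {V : Type*} (G : SimpleGraph V) (c : Sym2 V → ℕ) (α β : ℕ) :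
    SimpleGraph V where
  Adj x y := G.Adj x y ∧ (c (s(x, y)) = α ∨ c (s(x, y)) = β)
  symm := by
    constructor
    intro x y hxy
    refine ⟨hxy.1.symm, ?_⟩
    rw [Sym2.eq_swap]
    exact hxy.2
  loopless := ⟨fun x hx => G.loopless.irrefl x hx.1⟩

/-- `x` and `y` are `(α,β)`-linked with respect to the coloring `c` of `G`:
they belong to the same `(α,β)`-chain. -/
def Linked {V : Type*} (G : SimpleGraph V) (c : Sym2 V → ℕ) (α β : ℕ) (x y : V) : Prop :=
  (chainGraph G c α β).Reachable x y

namespace StK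

/-- swap two colors -/
def swapFn (τ σ μ : ℕ) : ℕ := if μ = τ then σ else if μ = σ then τ else μ

lemma swapFn_left (τ σ : ℕ) : swapFn τ σ τ = σ := by simp [swapFn]

lemma swapFn_right (τ σ : ℕ) (h : τ ≠ σ) : swapFn τ σ σ = τ := by
  simp [swapFn, h.symm]

lemma swapFn_other (τ σ μ : ℕ) (h1 : μ ≠ τ) (h2 : μ ≠ σ) : swapFn τ σ μ = μ := by
  simp [swapFn, h1, h2]

lemma swapFn_invol (τ σ μ : ℕ) (h : τ ≠ σ) : swapFn τ σ (swapFn τ σ μ) = μ := by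
  unfold swapFn
  split_ifs with h1 h2 <;> simp_all [swapFn]

lemma swapFn_inj (τ σ μ ν : ℕ) (h : τ ≠ σ) (he : swapFn τ σ μ = swapFn τ σ ν) : μ = ν := by
  have := congrArg (swapFn τ σ) he
  rwa [swapFn_invol _ _ _ h, swapFn_invol _ _ _ h] at this

lemma swapFn_eq_iff (τ σ μ ν : ℕ) (h : τ ≠ σ) : swapFn τ σ μ = ν ↔ μ = swapFn τ σ ν := by
  constructor
  · rintro rfl; rw [swapFn_invol _ _ _ h]
  · rintro rfl; rw [swapFn_invol _ _ _ h]

lemma swapFn_bounds (τ σ μ Δ : ℕ) (hτ1 : 1 ≤ τ) (hτ2 : τ ≤ Δ) (hσ1 : 1 ≤ σ) (hσ2 : σ ≤ Δ) :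
    (1 ≤ μ ∧ μ ≤ Δ) ↔ (1 ≤ swapFn τ σ μ ∧ swapFn τ σ μ ≤ Δ) := by
  unfold swapFn
  split_ifs with h1 h2 <;> subst_eqs <;> omega






variable {V : Type*} [Fintype V] [DecidableEq V]

lemma nested (C : SimpleGraph V) [DecidableRel C.Adj]
    (hdeg : ∀ v, C.degree v ≤ 2) :
    ∀ (n : ℕ) (u y₁ y₂ : V) (P : C.Walk u y₁) (Q : C.Walk u y₂),
      P.length + Q.length ≤ n → P.IsPath → Q.IsPath →
      (∀ w₁ w₂ : V, s(u, w₁) ∈ P.edges → s(u, w₂) ∈ Q.edges → w₁ = w₂) →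
      y₂ ∈ P.support ∨ y₁ ∈ Q.support := by
  intro n
  induction n with
  | zero =>
    intro u y₁ y₂ P Q hlen _ _ _
    cases P with
    | nil => right; exact Q.start_mem_support
    | cons h p => simp [SimpleGraph.Walk.length_cons] at hlen
  | succ n ih =>
    intro u y₁ y₂ P Q hlen hP hQ hfa
    cases P with
    | nil => right; exact Q.start_mem_support
    | cons h1 P' =>
      cases Q with
      | nil => left; exact (SimpleGraph.Walk.cons h1 P').start_mem_support
      | cons h2 Q' =>
        rename_i w1 w2
        -- w1 = w2
        have hw : w1 = w2 := by
          apply hfa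
          · simp [SimpleGraph.Walk.edges_cons]
          · simp [SimpleGraph.Walk.edges_cons]
        subst hw
        rw [SimpleGraph.Walk.cons_isPath_iff] at hP hQ
        have hfa' : ∀ z₁ z₂ : V, s(w1, z₁) ∈ P'.edges → s(w1, z₂) ∈ Q'.edges → z₁ = z₂ := by
          intro z₁ z₂ hz₁ hz₂
          have ha₁ : C.Adj w1 z₁ := P'.adj_of_mem_edges hz₁
          have ha₂ : C.Adj w1 z₂ := Q'.adj_of_mem_edges hz₂
          have hz₁u : z₁ ≠ u := by
            rintro rfl
            exact hP.2 (P'.snd_mem_support_of_mem_edges hz₁)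
          have hz₂u : z₂ ≠ u := by
            rintro rfl
            exact hQ.2 (Q'.snd_mem_support_of_mem_edges hz₂)
          have hu : u ∈ C.neighborFinset w1 := by
            rw [SimpleGraph.mem_neighborFinset]; exact h1.symm
          have hcard : ((C.neighborFinset w1).erase u).card ≤ 1 := by
            have := hdeg w1
            rw [← SimpleGraph.card_neighborFinset_eq_degree] at this
            have := Finset.card_erase_of_mem hu
            omega
          have hm₁ : z₁ ∈ (C.neighborFinset w1).erase u :=
            Finset.mem_erase.mpr ⟨hz₁u, (SimpleGraph.mem_neighborFinset _ _ _).mpr ha₁⟩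
          have hm₂ : z₂ ∈ (C.neighborFinset w1).erase u :=
            Finset.mem_erase.mpr ⟨hz₂u, (SimpleGraph.mem_neighborFinset _ _ _).mpr ha₂⟩
          exact Finset.card_le_one.mp hcard _ hm₁ _ hm₂
        have hlen' : P'.length + Q'.length ≤ n := by
          simp [SimpleGraph.Walk.length_cons] at hlen; omega
        rcases ih w1 y₁ y₂ P' Q' hlen' hP.1 hQ.1 hfa' with h | h
        · left; exact List.mem_cons_of_mem _ h
        · right; exact List.mem_cons_of_mem _ h

lemma internal_two_le_degree (C : SimpleGraph V) [DecidableRel C.Adj]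
    {s t x : V} (P : C.Walk s t) (hP : P.IsPath) (hx : x ∈ P.support)
    (hxs : x ≠ s) (hxt : x ≠ t) : 2 ≤ C.degree x := by
  set q := P.takeUntil x hx with hq
  set r := P.dropUntil x hx with hr
  have hspec : q.append r = P := P.take_spec hx
  have hqP : q.IsPath := hP.takeUntil hx
  have hrP : r.IsPath := hP.dropUntil hx
  -- last edge of q
  obtain ⟨u₁, hadj₁, t₁, ht₁⟩ := SimpleGraph.Walk.exists_eq_cons_of_ne hxs q.reverse
  obtain ⟨u₂, hadj₂, t₂, ht₂⟩ := SimpleGraph.Walk.exists_eq_cons_of_ne hxt r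
  have hu₁q : u₁ ∈ q.support := by
    have : u₁ ∈ q.reverse.support := by
      rw [ht₁]; simp [SimpleGraph.Walk.support_cons]
    rwa [SimpleGraph.Walk.support_reverse, List.mem_reverse] at this
  have hu₂r : u₂ ∈ r.support.tail := by
    rw [ht₂]; simp [SimpleGraph.Walk.support_cons]
  have hnodup : (q.support ++ r.support.tail).Nodup := by
    rw [← SimpleGraph.Walk.support_append, hspec]
    exact hP.support_nodup
  have hne : u₁ ≠ u₂ := by
    rintro rfl
    exact (List.disjoint_of_nodup_append hnodup) hu₁q hu₂r
  have h1 : u₁ ∈ C.neighborFinset x := (SimpleGraph.mem_neighborFinset _ _ _).mpr hadj₁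
  have h2 : u₂ ∈ C.neighborFinset x := (SimpleGraph.mem_neighborFinset _ _ _).mpr hadj₂
  have : ({u₁, u₂} : Finset V) ⊆ C.neighborFinset x := by
    intro z hz; rcases Finset.mem_insert.mp hz with rfl | hz
    · exact h1
    · rw [Finset.mem_singleton] at hz; subst hz; exact h2
  calc 2 = ({u₁, u₂} : Finset V).card := (Finset.card_pair hne).symm
    _ ≤ (C.neighborFinset x).card := Finset.card_le_card this
    _ = C.degree x := SimpleGraph.card_neighborFinset_eq_degree _ _

lemma threeEnd (C : SimpleGraph V) [DecidableRel C.Adj]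
    (hdeg2 : ∀ v, C.degree v ≤ 2) {a b x : V}
    (ha : C.degree a ≤ 1) (hb : C.degree b ≤ 1) (hx : C.degree x ≤ 1)
    (hxa : x ≠ a) (hxb : x ≠ b) (hab : a ≠ b) (hre : C.Reachable a b) :
    ¬ C.Reachable x a := by
  intro h2
  obtain ⟨P0⟩ := hre
  obtain ⟨Q0⟩ := h2.symm
  set P : C.Path a b := P0.toPath
  set Q : C.Path a x := Q0.toPath
  have hfa : ∀ w₁ w₂ : V, s(a, w₁) ∈ (P : C.Walk a b).edges →
      s(a, w₂) ∈ (Q : C.Walk a x).edges → w₁ = w₂ := by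
    intro w₁ w₂ h1' h2'
    have ha₁ : C.Adj a w₁ := (P : C.Walk a b).adj_of_mem_edges h1'
    have ha₂ : C.Adj a w₂ := (Q : C.Walk a x).adj_of_mem_edges h2'
    have hm₁ : w₁ ∈ C.neighborFinset a := (SimpleGraph.mem_neighborFinset _ _ _).mpr ha₁
    have hm₂ : w₂ ∈ C.neighborFinset a := (SimpleGraph.mem_neighborFinset _ _ _).mpr ha₂
    have : (C.neighborFinset a).card ≤ 1 := by
      rwa [SimpleGraph.card_neighborFinset_eq_degree]
    exact Finset.card_le_one.mp this _ hm₁ _ hm₂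
  rcases nested C hdeg2 ((P : C.Walk a b).length + (Q : C.Walk a x).length) a b x
      (P : C.Walk a b) (Q : C.Walk a x) le_rfl P.2 Q.2 hfa with h | h
  · have := internal_two_le_degree C (P : C.Walk a b) P.2 h hxa hxb
    omega
  · have := internal_two_le_degree C (Q : C.Walk a x) Q.2 h (Ne.symm hab) (fun hbx => hxb hbx.symm)
    omega








def Hgr (G : SimpleGraph V) (a b : V) : SimpleGraph V := G.deleteEdges {s(a,b)}

instance {G : SimpleGraph V} [DecidableRel G.Adj] {a b : V} : DecidableRel (Hgr G a b).Adj :=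
  fun u v => decidable_of_iff (G.Adj u v ∧ ¬ (s(u,v) = s(a,b)))
    (by rw [Hgr, SimpleGraph.deleteEdges_adj]; simp)

omit [Fintype V] [DecidableEq V] in
lemma Hgr_adj {G : SimpleGraph V} {a b u v : V} :
    (Hgr G a b).Adj u v ↔ G.Adj u v ∧ s(u,v) ≠ s(a,b) := by
  rw [Hgr, SimpleGraph.deleteEdges_adj]; simp

omit [Fintype V] [DecidableEq V] in
lemma Hgr_edge_mem {G : SimpleGraph V} {a b : V} {e : Sym2 V} :
    e ∈ (Hgr G a b).edgeSet ↔ e ∈ G.edgeSet ∧ e ≠ s(a,b) := by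
  rw [Hgr, SimpleGraph.edgeSet_deleteEdges]; simp

structure Setup (G : SimpleGraph V) [DecidableRel G.Adj] (Δ : ℕ) (a b x y : V) : Prop where
  hab : G.Adj a b
  hya : G.Adj y a
  hxy : G.Adj x y
  hxa : x ≠ a
  hxb : x ≠ b
  hnxa : ¬ G.Adj x a
  hnxb : ¬ G.Adj x b
  hfd : G.degree a + G.degree b = Δ + 2
  hdega : G.degree a ≤ Δ
  hdegb : G.degree b ≤ Δ
  noC : ¬ ∃ c, IsEdgeColoring G Δ c

variable {G : SimpleGraph V} [DecidableRel G.Adj] {Δ : ℕ} {a b x y : V}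

namespace Setup

lemma hneab (st : Setup G Δ a b x y) : a ≠ b := st.hab.ne
lemma hyne_a (st : Setup G Δ a b x y) : y ≠ a := st.hya.ne
lemma hyne_b (st : Setup G Δ a b x y) : y ≠ b := fun h => st.hnxb (h ▸ st.hxy)
lemma hxny (st : Setup G Δ a b x y) : x ≠ y := st.hxy.ne

lemma exy (st : Setup G Δ a b x y) : s(x,y) ∈ (Hgr G a b).edgeSet := by
  rw [Hgr_edge_mem]
  refine ⟨(SimpleGraph.mem_edgeSet _).mpr st.hxy, ?_⟩
  intro hh
  rcases Sym2.eq_iff.mp hh with ⟨rfl, -⟩ | ⟨rfl, -⟩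
  · exact st.hxa rfl
  · exact st.hxb rfl

lemma eay (st : Setup G Δ a b x y) : s(a,y) ∈ (Hgr G a b).edgeSet := by
  rw [Hgr_edge_mem]
  refine ⟨(SimpleGraph.mem_edgeSet _).mpr st.hya.symm, ?_⟩
  intro hh
  rcases Sym2.eq_iff.mp hh with ⟨-, rfl⟩ | ⟨rfl, -⟩
  · exact st.hyne_b rfl
  · exact st.hneab rfl

lemma eay_ne_exy (st : Setup G Δ a b x y) : s(a,y) ≠ s(x,y) := by
  intro hh
  rcases Sym2.eq_iff.mp hh with ⟨rfl, -⟩ | ⟨rfl, -⟩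
  · exact st.hxa rfl
  · exact st.hyne_a rfl

lemma degH_a (st : Setup G Δ a b x y) : (Hgr G a b).degree a + 1 = G.degree a := by
  have hnb : (Hgr G a b).neighborFinset a = (G.neighborFinset a).erase b := by
    ext u
    simp only [SimpleGraph.mem_neighborFinset, Finset.mem_erase, Hgr_adj]
    constructor
    · rintro ⟨h1, h2⟩
      refine ⟨?_, h1⟩
      rintro rfl
      exact h2 rfl
    · rintro ⟨h1, h2⟩
      refine ⟨h2, ?_⟩
      intro hh
      rcases Sym2.eq_iff.mp hh with ⟨-, rfl⟩ | ⟨rfl, -⟩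
      · exact h1 rfl
      · exact st.hneab rfl
  rw [← SimpleGraph.card_neighborFinset_eq_degree, ← SimpleGraph.card_neighborFinset_eq_degree, hnb,
    Finset.card_erase_of_mem ((SimpleGraph.mem_neighborFinset _ _ _).mpr st.hab)]
  have : 0 < (G.neighborFinset a).card :=
    Finset.card_pos.mpr ⟨b, (SimpleGraph.mem_neighborFinset _ _ _).mpr st.hab⟩
  omega

lemma degH_b (st : Setup G Δ a b x y) : (Hgr G a b).degree b + 1 = G.degree b := by
  have hnb : (Hgr G a b).neighborFinset b = (G.neighborFinset b).erase a := by
    ext u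
    simp only [SimpleGraph.mem_neighborFinset, Finset.mem_erase, Hgr_adj]
    constructor
    · rintro ⟨h1, h2⟩
      refine ⟨?_, h1⟩
      rintro rfl
      exact h2 (by rw [Sym2.eq_iff]; right; exact ⟨rfl, rfl⟩)
    · rintro ⟨h1, h2⟩
      refine ⟨h2, ?_⟩
      intro hh
      rcases Sym2.eq_iff.mp hh with ⟨rfl, -⟩ | ⟨-, rfl⟩
      · exact st.hneab rfl
      · exact h1 rfl
  rw [← SimpleGraph.card_neighborFinset_eq_degree, ← SimpleGraph.card_neighborFinset_eq_degree, hnb,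
    Finset.card_erase_of_mem ((SimpleGraph.mem_neighborFinset _ _ _).mpr st.hab.symm)]
  have : 0 < (G.neighborFinset b).card :=
    Finset.card_pos.mpr ⟨a, (SimpleGraph.mem_neighborFinset _ _ _).mpr st.hab.symm⟩
  omega

lemma degH_x (st : Setup G Δ a b x y) : (Hgr G a b).degree x = G.degree x := by
  have hnb : (Hgr G a b).neighborFinset x = G.neighborFinset x := by
    ext u
    simp only [SimpleGraph.mem_neighborFinset, Hgr_adj]
    constructor
    · exact fun h => h.1
    · intro h
      refine ⟨h, ?_⟩
      intro hh
      rcases Sym2.eq_iff.mp hh with ⟨rfl, -⟩ | ⟨rfl, -⟩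
      · exact st.hxa rfl
      · exact st.hxb rfl
  rw [← SimpleGraph.card_neighborFinset_eq_degree, ← SimpleGraph.card_neighborFinset_eq_degree, hnb]

end Setup

lemma missing_card (c : Sym2 V → ℕ) (hc : IsEdgeColoring (Hgr G a b) Δ c) (v : V) :
    ∃ F : Finset ℕ, (∀ μ, μ ∈ F ↔ μ ∈ missingColors (Hgr G a b) Δ c v) ∧
      F.card + (Hgr G a b).degree v = Δ := by
  classical
  set P : Finset ℕ := ((Hgr G a b).neighborFinset v).image (fun u => c s(v,u)) with hP
  have hPIcc : P ⊆ Finset.Icc 1 Δ := by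
    intro μ hμ
    simp only [hP, Finset.mem_image] at hμ
    obtain ⟨u, hu, rfl⟩ := hμ
    have he : s(v,u) ∈ (Hgr G a b).edgeSet :=
      (SimpleGraph.mem_edgeSet _).mpr ((SimpleGraph.mem_neighborFinset _ _ _).mp hu)
    have := hc.1 _ he
    rw [Finset.mem_Icc]
    exact this
  have hinj : Set.InjOn (fun u => c s(v,u)) ((Hgr G a b).neighborFinset v) := by
    intro u hu u' hu' heq
    by_contra hne
    have hadj : (Hgr G a b).Adj v u := (SimpleGraph.mem_neighborFinset _ _ _).mp hu
    have hadj' : (Hgr G a b).Adj v u' := (SimpleGraph.mem_neighborFinset _ _ _).mp hu'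
    have hene : s(v,u) ≠ s(v,u') := by
      intro hh
      rcases Sym2.eq_iff.mp hh with ⟨-, h⟩ | ⟨h1, -⟩
      · exact hne h
      · exact hadj'.ne h1
    exact hc.2 _ ((SimpleGraph.mem_edgeSet _).mpr hadj) _ ((SimpleGraph.mem_edgeSet _).mpr hadj')
      hene ⟨v, Sym2.mem_mk_left _ _, Sym2.mem_mk_left _ _⟩ heq
  have hcardP : P.card = (Hgr G a b).degree v := by
    rw [hP, Finset.card_image_of_injOn hinj, SimpleGraph.card_neighborFinset_eq_degree]
  have hdle : (Hgr G a b).degree v ≤ Δ := by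
    have := Finset.card_le_card hPIcc
    rwa [hcardP, Nat.card_Icc, Nat.add_sub_cancel] at this
  refine ⟨Finset.Icc 1 Δ \ P, ?_, ?_⟩
  · intro μ
    rw [Finset.mem_sdiff, Finset.mem_Icc]
    constructor
    · rintro ⟨⟨h1, h2⟩, h3⟩
      refine ⟨h1, h2, ?_⟩
      intro e he hv heq
      obtain ⟨u, rfl⟩ := Sym2.mem_iff_exists.mp hv
      apply h3
      rw [hP, Finset.mem_image]
      exact ⟨u, (SimpleGraph.mem_neighborFinset _ _ _).mpr ((SimpleGraph.mem_edgeSet _).mp he), heq⟩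
    · rintro ⟨h1, h2, h3⟩
      refine ⟨⟨h1, h2⟩, ?_⟩
      intro hμP
      rw [hP, Finset.mem_image] at hμP
      obtain ⟨u, hu, hcu⟩ := hμP
      exact h3 s(v,u)
        ((SimpleGraph.mem_edgeSet _).mpr ((SimpleGraph.mem_neighborFinset _ _ _).mp hu))
        (Sym2.mem_mk_left _ _) hcu
  · rw [Finset.card_sdiff_of_subset hPIcc, hcardP, Nat.card_Icc]
    omega

lemma Setup.no_common_missing (st : Setup G Δ a b x y) (c : Sym2 V → ℕ)
    (hc : IsEdgeColoring (Hgr G a b) Δ c) {μ : ℕ}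
    (hma : μ ∈ missingColors (Hgr G a b) Δ c a)
    (hmb : μ ∈ missingColors (Hgr G a b) Δ c b) : False := by
  apply st.noC
  classical
  refine ⟨fun e => if e = s(a,b) then μ else c e, ?_, ?_⟩
  · intro e he
    dsimp only
    by_cases h : e = s(a,b)
    · rw [if_pos h]; exact ⟨hma.1, hma.2.1⟩
    · rw [if_neg h]; exact hc.1 e (Hgr_edge_mem.mpr ⟨he, h⟩)
  · intro e he f hf hne hsh
    obtain ⟨v, hve, hvf⟩ := hsh
    dsimp only
    by_cases he' : e = s(a,b) <;> by_cases hf' : f = s(a,b)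
    · exact absurd (he'.trans hf'.symm) hne
    · subst he'
      rw [if_pos rfl, if_neg hf']
      rcases Sym2.mem_iff.mp hve with rfl | rfl
      · exact fun h => (hma.2.2 f (Hgr_edge_mem.mpr ⟨hf, hf'⟩) hvf) h.symm
      · exact fun h => (hmb.2.2 f (Hgr_edge_mem.mpr ⟨hf, hf'⟩) hvf) h.symm
    · subst hf'
      rw [if_pos rfl, if_neg he']
      rcases Sym2.mem_iff.mp hvf with rfl | rfl
      · exact hma.2.2 e (Hgr_edge_mem.mpr ⟨he, he'⟩) hve
      · exact hmb.2.2 e (Hgr_edge_mem.mpr ⟨he, he'⟩) hve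
    · rw [if_neg he', if_neg hf']
      exact hc.2 e (Hgr_edge_mem.mpr ⟨he, he'⟩) f (Hgr_edge_mem.mpr ⟨hf, hf'⟩) hne ⟨v, hve, hvf⟩

lemma Setup.partitionAB (st : Setup G Δ a b x y) (c : Sym2 V → ℕ)
    (hc : IsEdgeColoring (Hgr G a b) Δ c) {μ : ℕ} (h1 : 1 ≤ μ) (h2 : μ ≤ Δ) :
    μ ∈ missingColors (Hgr G a b) Δ c a ∨ μ ∈ missingColors (Hgr G a b) Δ c b := by
  obtain ⟨Fa, hFa, hca⟩ := missing_card c hc a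
  obtain ⟨Fb, hFb, hcb⟩ := missing_card c hc b
  have hdga := st.degH_a
  have hdgb := st.degH_b
  have hfd := st.hfd
  have hdisj : Disjoint Fa Fb := by
    rw [Finset.disjoint_left]
    intro μ' h h'
    exact st.no_common_missing c hc ((hFa μ').mp h) ((hFb μ').mp h')
  have hsub : Fa ∪ Fb ⊆ Finset.Icc 1 Δ := by
    intro μ' hμ'
    rcases Finset.mem_union.mp hμ' with h | h
    · have := (hFa μ').mp h; exact Finset.mem_Icc.mpr ⟨this.1, this.2.1⟩
    · have := (hFb μ').mp h; exact Finset.mem_Icc.mpr ⟨this.1, this.2.1⟩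
  have hcard : (Fa ∪ Fb).card = Δ := by
    rw [Finset.card_union_of_disjoint hdisj]
    omega
  have heq : Fa ∪ Fb = Finset.Icc 1 Δ := by
    apply Finset.eq_of_subset_of_card_le hsub
    rw [hcard, Nat.card_Icc]
    omega
  have hmem : μ ∈ Fa ∪ Fb := by
    rw [heq, Finset.mem_Icc]; exact ⟨h1, h2⟩
  rcases Finset.mem_union.mp hmem with h | h
  · exact Or.inl ((hFa μ).mp h)
  · exact Or.inr ((hFb μ).mp h)


set_option linter.unusedSectionVars false






instance chainDec {H : SimpleGraph V} [DecidableRel H.Adj] {c : Sym2 V → ℕ} {τ σ : ℕ} :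
    DecidableRel (chainGraph H c τ σ).Adj := fun u v =>
  decidable_of_iff (H.Adj u v ∧ (c s(u,v) = τ ∨ c s(u,v) = σ)) Iff.rfl

lemma chain_deg_le_two (c : Sym2 V → ℕ) (hc : IsEdgeColoring (Hgr G a b) Δ c) (τ σ : ℕ) (v : V) :
    (chainGraph (Hgr G a b) c τ σ).degree v ≤ 2 := by
  classical
  have h1 : ((chainGraph (Hgr G a b) c τ σ).neighborFinset v).card ≤ ({τ, σ} : Finset ℕ).card := by
    apply Finset.card_le_card_of_injOn (fun u => c s(v,u))
    · intro u hu
      have : (Hgr G a b).Adj v u ∧ (c s(v,u) = τ ∨ c s(v,u) = σ) := (SimpleGraph.mem_neighborFinset _ _ _).mp hu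
      rcases this.2 with h | h <;> simp [h]
    · intro u hu u' hu' heq
      by_contra hne
      have hadj : (Hgr G a b).Adj v u ∧ (c s(v,u) = τ ∨ c s(v,u) = σ) := (SimpleGraph.mem_neighborFinset _ _ _).mp hu
      have hadj' : (Hgr G a b).Adj v u' ∧ (c s(v,u') = τ ∨ c s(v,u') = σ) := (SimpleGraph.mem_neighborFinset _ _ _).mp hu'
      have hene : s(v,u) ≠ s(v,u') := by
        intro hh
        rcases Sym2.eq_iff.mp hh with ⟨-, h⟩ | ⟨h1, -⟩
        · exact hne h
        · exact hadj'.1.ne h1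
      exact hc.2 _ ((SimpleGraph.mem_edgeSet _).mpr hadj.1) _ ((SimpleGraph.mem_edgeSet _).mpr hadj'.1)
        hene ⟨v, Sym2.mem_mk_left _ _, Sym2.mem_mk_left _ _⟩ heq
  have h2 : ({τ, σ} : Finset ℕ).card ≤ 2 := by
    apply le_trans (Finset.card_insert_le _ _)
    simp
  rw [← SimpleGraph.card_neighborFinset_eq_degree]
  omega

lemma chain_deg_le_one (c : Sym2 V → ℕ) (hc : IsEdgeColoring (Hgr G a b) Δ c) {τ σ : ℕ} {v : V}
    (hm : τ ∈ missingColors (Hgr G a b) Δ c v ∨ σ ∈ missingColors (Hgr G a b) Δ c v) :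
    (chainGraph (Hgr G a b) c τ σ).degree v ≤ 1 := by
  classical
  rcases hm with hm | hm
  case _ =>
    have h1 : ((chainGraph (Hgr G a b) c τ σ).neighborFinset v).card ≤ ({σ} : Finset ℕ).card := by
      apply Finset.card_le_card_of_injOn (fun u => c s(v,u))
      · intro u hu
        have hadj : (Hgr G a b).Adj v u ∧ (c s(v,u) = τ ∨ c s(v,u) = σ) := (SimpleGraph.mem_neighborFinset _ _ _).mp hu
        have hne := hm.2.2 s(v,u) ((SimpleGraph.mem_edgeSet _).mpr hadj.1) (Sym2.mem_mk_left _ _)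
        rcases hadj.2 with h | h
        · exact absurd h hne
        · simp [h]
      · intro u hu u' hu' heq
        by_contra hne
        have hadj : (Hgr G a b).Adj v u ∧ (c s(v,u) = τ ∨ c s(v,u) = σ) := (SimpleGraph.mem_neighborFinset _ _ _).mp hu
        have hadj' : (Hgr G a b).Adj v u' ∧ (c s(v,u') = τ ∨ c s(v,u') = σ) := (SimpleGraph.mem_neighborFinset _ _ _).mp hu'
        have hene : s(v,u) ≠ s(v,u') := by
          intro hh
          rcases Sym2.eq_iff.mp hh with ⟨-, h⟩ | ⟨h1, -⟩
          · exact hne h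
          · exact hadj'.1.ne h1
        exact hc.2 _ ((SimpleGraph.mem_edgeSet _).mpr hadj.1) _ ((SimpleGraph.mem_edgeSet _).mpr hadj'.1)
          hene ⟨v, Sym2.mem_mk_left _ _, Sym2.mem_mk_left _ _⟩ heq
    rw [← SimpleGraph.card_neighborFinset_eq_degree]
    simpa using h1
  case _ =>
    have h1 : ((chainGraph (Hgr G a b) c τ σ).neighborFinset v).card ≤ ({τ} : Finset ℕ).card := by
      apply Finset.card_le_card_of_injOn (fun u => c s(v,u))
      · intro u hu
        have hadj : (Hgr G a b).Adj v u ∧ (c s(v,u) = τ ∨ c s(v,u) = σ) := (SimpleGraph.mem_neighborFinset _ _ _).mp hu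
        have hne := hm.2.2 s(v,u) ((SimpleGraph.mem_edgeSet _).mpr hadj.1) (Sym2.mem_mk_left _ _)
        rcases hadj.2 with h | h
        · simp [h]
        · exact absurd h hne
      · intro u hu u' hu' heq
        by_contra hne
        have hadj : (Hgr G a b).Adj v u ∧ (c s(v,u) = τ ∨ c s(v,u) = σ) := (SimpleGraph.mem_neighborFinset _ _ _).mp hu
        have hadj' : (Hgr G a b).Adj v u' ∧ (c s(v,u') = τ ∨ c s(v,u') = σ) := (SimpleGraph.mem_neighborFinset _ _ _).mp hu'
        have hene : s(v,u) ≠ s(v,u') := by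
          intro hh
          rcases Sym2.eq_iff.mp hh with ⟨-, h⟩ | ⟨h1, -⟩
          · exact hne h
          · exact hadj'.1.ne h1
        exact hc.2 _ ((SimpleGraph.mem_edgeSet _).mpr hadj.1) _ ((SimpleGraph.mem_edgeSet _).mpr hadj'.1)
          hene ⟨v, Sym2.mem_mk_left _ _, Sym2.mem_mk_left _ _⟩ heq
    rw [← SimpleGraph.card_neighborFinset_eq_degree]
    simpa using h1

open scoped Classical in
noncomputable def swapC (c : Sym2 V → ℕ) (τ σ : ℕ) (S : Set V) : Sym2 V → ℕ :=
  fun e => if ((c e = τ ∨ c e = σ) ∧ ∃ w ∈ e, w ∈ S) then swapFn τ σ (c e) else c e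

lemma swapC_at (c : Sym2 V → ℕ) (τ σ : ℕ) {S : Set V} {v : V} (hv : v ∈ S) {e : Sym2 V}
    (hve : v ∈ e) : swapC c τ σ S e = swapFn τ σ (c e) := by
  unfold swapC
  by_cases h : c e = τ ∨ c e = σ
  · rw [if_pos ⟨h, v, hve, hv⟩]
  · rw [if_neg (fun hh => h hh.1),
      swapFn_other _ _ _ (fun h' => h (Or.inl h')) (fun h' => h (Or.inr h'))]

lemma swapC_off (c : Sym2 V → ℕ) (τ σ : ℕ) {S : Set V}
    (hS : ∀ ⦃u w : V⦄, u ∈ S → (chainGraph (Hgr G a b) c τ σ).Adj u w → w ∈ S)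
    {v : V} (hv : v ∉ S) {e : Sym2 V} (he : e ∈ (Hgr G a b).edgeSet) (hve : v ∈ e) :
    swapC c τ σ S e = c e := by
  unfold swapC
  rw [if_neg]
  rintro ⟨hcol, w, hwe, hwS⟩
  obtain ⟨u, rfl⟩ := Sym2.mem_iff_exists.mp hve
  rcases Sym2.mem_iff.mp hwe with rfl | rfl
  · exact hv hwS
  · apply hv
    apply hS hwS
    show (Hgr G a b).Adj _ _ ∧ _
    refine ⟨((SimpleGraph.mem_edgeSet _).mp he).symm, ?_⟩
    rwa [Sym2.eq_swap]

lemma swapC_proper (c : Sym2 V → ℕ) (τ σ : ℕ) (hc : IsEdgeColoring (Hgr G a b) Δ c)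
    (hτ1 : 1 ≤ τ) (hτΔ : τ ≤ Δ) (hσ1 : 1 ≤ σ) (hσΔ : σ ≤ Δ) (hτσ : τ ≠ σ) {S : Set V}
    (hS : ∀ ⦃u w : V⦄, u ∈ S → (chainGraph (Hgr G a b) c τ σ).Adj u w → w ∈ S) :
    IsEdgeColoring (Hgr G a b) Δ (swapC c τ σ S) := by
  constructor
  · intro e he
    unfold swapC
    split_ifs with h
    · exact (swapFn_bounds τ σ (c e) Δ hτ1 hτΔ hσ1 hσΔ).mp (hc.1 e he)
    · exact hc.1 e he
  · rintro e he f hf hne ⟨v, hve, hvf⟩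
    by_cases hv : v ∈ S
    · rw [swapC_at c τ σ hv hve, swapC_at c τ σ hv hvf]
      intro hh
      exact hc.2 e he f hf hne ⟨v, hve, hvf⟩ (swapFn_inj _ _ _ _ hτσ hh)
    · rw [swapC_off c τ σ hS hv he hve, swapC_off c τ σ hS hv hf hvf]
      exact hc.2 e he f hf hne ⟨v, hve, hvf⟩

lemma swapC_missing_off (c : Sym2 V → ℕ) (τ σ : ℕ) {S : Set V}
    (hS : ∀ ⦃u w : V⦄, u ∈ S → (chainGraph (Hgr G a b) c τ σ).Adj u w → w ∈ S)
    {v : V} (hv : v ∉ S) :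
    missingColors (Hgr G a b) Δ (swapC c τ σ S) v = missingColors (Hgr G a b) Δ c v := by
  ext μ
  unfold missingColors
  simp only [Set.mem_setOf_eq]
  constructor <;> rintro ⟨h1, h2, h3⟩ <;> refine ⟨h1, h2, ?_⟩ <;> intro e he hvew
  · have := h3 e he hvew
    rwa [swapC_off c τ σ hS hv he hvew] at this
  · rw [swapC_off c τ σ hS hv he hvew]
    exact h3 e he hvew

lemma swapC_missing_at (c : Sym2 V → ℕ) (τ σ : ℕ) (hτσ : τ ≠ σ)
    (hτ1 : 1 ≤ τ) (hτΔ : τ ≤ Δ) (hσ1 : 1 ≤ σ) (hσΔ : σ ≤ Δ)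
    {S : Set V} {v : V} (hv : v ∈ S) (μ : ℕ) :
    μ ∈ missingColors (Hgr G a b) Δ (swapC c τ σ S) v ↔
      swapFn τ σ μ ∈ missingColors (Hgr G a b) Δ c v := by
  unfold missingColors
  simp only [Set.mem_setOf_eq]
  constructor
  · rintro ⟨h1, h2, h3⟩
    obtain ⟨h1', h2'⟩ := (swapFn_bounds τ σ μ Δ hτ1 hτΔ hσ1 hσΔ).mp ⟨h1, h2⟩
    refine ⟨h1', h2', ?_⟩
    intro e he hvew heq
    exact h3 e he hvew (by rw [swapC_at c τ σ hv hvew, heq, swapFn_invol _ _ _ hτσ])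
  · rintro ⟨h1, h2, h3⟩
    obtain ⟨h1', h2'⟩ := (swapFn_bounds τ σ (swapFn τ σ μ) Δ hτ1 hτΔ hσ1 hσΔ).mp ⟨h1, h2⟩
    rw [swapFn_invol _ _ _ hτσ] at h1' h2'
    refine ⟨h1', h2', ?_⟩
    intro e he hvew heq
    rw [swapC_at c τ σ hv hvew] at heq
    exact h3 e he hvew ((swapFn_eq_iff _ _ _ _ hτσ).mp heq)

lemma Setup.linked (st : Setup G Δ a b x y) (c : Sym2 V → ℕ)
    (hc : IsEdgeColoring (Hgr G a b) Δ c) {τ σ : ℕ}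
    (hτ : τ ∈ missingColors (Hgr G a b) Δ c a) (hσ : σ ∈ missingColors (Hgr G a b) Δ c b) :
    (chainGraph (Hgr G a b) c τ σ).Reachable a b := by
  classical
  by_contra hnr
  have hτσ : τ ≠ σ := fun h => st.no_common_missing c hc hτ (h ▸ hσ)
  set S : Set V := {u | (chainGraph (Hgr G a b) c τ σ).Reachable b u} with hSdef
  have hS : ∀ ⦃u w : V⦄, u ∈ S → (chainGraph (Hgr G a b) c τ σ).Adj u w → w ∈ S :=
    fun u w hu h => hu.trans h.reachable
  have hbS : b ∈ S := SimpleGraph.Reachable.refl b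
  have haS : a ∉ S := fun h => hnr (SimpleGraph.Reachable.symm h)
  have hc' := swapC_proper c τ σ hc hτ.1 hτ.2.1 hσ.1 hσ.2.1 hτσ hS
  have h1 : τ ∈ missingColors (Hgr G a b) Δ (swapC c τ σ S) b := by
    rw [swapC_missing_at c τ σ hτσ hτ.1 hτ.2.1 hσ.1 hσ.2.1 hbS, swapFn_left]
    exact hσ
  have h2 : τ ∈ missingColors (Hgr G a b) Δ (swapC c τ σ S) a := by
    rw [swapC_missing_off c τ σ hS haS]
    exact hτ
  exact st.no_common_missing (swapC c τ σ S) hc' h2 h1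

lemma Setup.doSwap (st : Setup G Δ a b x y) (c : Sym2 V → ℕ)
    (hc : IsEdgeColoring (Hgr G a b) Δ c) {τ σ : ℕ}
    (hτ : τ ∈ missingColors (Hgr G a b) Δ c a) (hσ : σ ∈ missingColors (Hgr G a b) Δ c b)
    (hpx : τ ∈ missingColors (Hgr G a b) Δ c x ∨ σ ∈ missingColors (Hgr G a b) Δ c x) :
    ∃ c' : Sym2 V → ℕ, IsEdgeColoring (Hgr G a b) Δ c' ∧
      (∀ e ∈ (Hgr G a b).edgeSet, a ∈ e → c' e = c e) ∧
      (∀ e ∈ (Hgr G a b).edgeSet, b ∈ e → c' e = c e) ∧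
      (∀ e ∈ (Hgr G a b).edgeSet, x ∈ e → c' e = swapFn τ σ (c e)) ∧
      (∀ μ, μ ∈ missingColors (Hgr G a b) Δ c' x ↔
        swapFn τ σ μ ∈ missingColors (Hgr G a b) Δ c x) ∧
      missingColors (Hgr G a b) Δ c' a = missingColors (Hgr G a b) Δ c a ∧
      missingColors (Hgr G a b) Δ c' b = missingColors (Hgr G a b) Δ c b := by
  classical
  have hτσ : τ ≠ σ := fun h => st.no_common_missing c hc hτ (h ▸ hσ)
  have hdeg2 := chain_deg_le_two c hc τ σ
  have hdega : (chainGraph (Hgr G a b) c τ σ).degree a ≤ 1 := chain_deg_le_one c hc (Or.inl hτ)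
  have hdegb : (chainGraph (Hgr G a b) c τ σ).degree b ≤ 1 := chain_deg_le_one c hc (Or.inr hσ)
  have hdegx : (chainGraph (Hgr G a b) c τ σ).degree x ≤ 1 := chain_deg_le_one c hc hpx
  have hreach := st.linked c hc hτ hσ
  have hnxa : ¬ (chainGraph (Hgr G a b) c τ σ).Reachable x a :=
    threeEnd _ hdeg2 hdega hdegb hdegx st.hxa st.hxb st.hneab hreach
  have hnxb : ¬ (chainGraph (Hgr G a b) c τ σ).Reachable x b :=
    threeEnd _ hdeg2 hdegb hdega hdegx st.hxb st.hxa (Ne.symm st.hneab) hreach.symm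
  set S : Set V := {u | (chainGraph (Hgr G a b) c τ σ).Reachable x u} with hSdef
  have hS : ∀ ⦃u w : V⦄, u ∈ S → (chainGraph (Hgr G a b) c τ σ).Adj u w → w ∈ S :=
    fun u w hu h => hu.trans h.reachable
  have haS : a ∉ S := fun h => hnxa h
  have hbS : b ∉ S := fun h => hnxb h
  have hxS : x ∈ S := SimpleGraph.Reachable.refl x
  refine ⟨swapC c τ σ S, swapC_proper c τ σ hc hτ.1 hτ.2.1 hσ.1 hσ.2.1 hτσ hS, ?_, ?_, ?_, ?_, ?_, ?_⟩
  · intro e he hae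
    exact swapC_off c τ σ hS haS he hae
  · intro e he hbe
    exact swapC_off c τ σ hS hbS he hbe
  · intro e he hxe
    exact swapC_at c τ σ hxS hxe
  · intro μ
    exact swapC_missing_at c τ σ hτσ hτ.1 hτ.2.1 hσ.1 hσ.2.1 hxS μ
  · exact swapC_missing_off c τ σ hS haS
  · exact swapC_missing_off c τ σ hS hbS


set_option linter.unusedSectionVars false
set_option maxHeartbeats 1000000

open SimpleGraph

variable {V : Type*} [Fintype V] [DecidableEq V]
variable {G : SimpleGraph V} [DecidableRel G.Adj] {Δ : ℕ} {a b x y : V}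

lemma Setup.eab_ne_eay (st : Setup G Δ a b x y) : s(a,b) ≠ s(a,y) := by
  intro hh
  rcases Sym2.eq_iff.mp hh with ⟨-, h⟩ | ⟨h, -⟩
  · exact st.hyne_b h.symm
  · exact st.hyne_a h.symm

lemma Setup.eab_ne_exy (st : Setup G Δ a b x y) : s(a,b) ≠ s(x,y) := by
  intro hh
  rcases Sym2.eq_iff.mp hh with ⟨h, -⟩ | ⟨-, h⟩
  · exact st.hxa h.symm
  · exact st.hxb h.symm

lemma Setup.L5 (st : Setup G Δ a b x y) (c : Sym2 V → ℕ)
    (hc : IsEdgeColoring (Hgr G a b) Δ c)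
    (hγ : c s(x,y) ∈ missingColors (Hgr G a b) Δ c a) :
    c s(a,y) ∉ missingColors (Hgr G a b) Δ c x := by
  intro hα
  classical
  have hαIcc := hc.1 _ st.eay
  have hγIcc := hc.1 _ st.exy
  have hαa : c s(a,y) ∉ missingColors (Hgr G a b) Δ c a :=
    fun h => h.2.2 s(a,y) st.eay (Sym2.mem_mk_left _ _) rfl
  have hαb : c s(a,y) ∈ missingColors (Hgr G a b) Δ c b :=
    (st.partitionAB c hc hαIcc.1 hαIcc.2).resolve_left hαa
  have hαγ : c s(a,y) ≠ c s(x,y) :=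
    hc.2 s(a,y) st.eay s(x,y) st.exy st.eay_ne_exy
      ⟨y, Sym2.mem_mk_right _ _, Sym2.mem_mk_right _ _⟩
  apply st.noC
  refine ⟨fun e => if e = s(a,b) then c s(a,y) else if e = s(a,y) then c s(x,y)
    else if e = s(x,y) then c s(a,y) else c e, ?_, ?_⟩
  · intro e he
    dsimp only
    split_ifs
    · exact hαIcc
    · exact hγIcc
    · exact hαIcc
    · rename_i n1 n2 n3
      exact hc.1 e (Hgr_edge_mem.mpr ⟨he, n1⟩)
  · intro e he f hf hne hsh
    obtain ⟨v, hve, hvf⟩ := hsh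
    dsimp only
    -- helper facts for generic edges
    have hgen : ∀ g ∈ G.edgeSet, g ≠ s(a,b) → g ≠ s(a,y) → g ≠ s(x,y) → ∀ w, w ∈ g →
        (w = a → c g ≠ c s(a,y) ∧ c g ≠ c s(x,y)) ∧
        (w = b → c g ≠ c s(a,y)) ∧
        (w = x → c g ≠ c s(a,y)) ∧
        (w = y → c g ≠ c s(a,y) ∧ c g ≠ c s(x,y)) := by
      intro g hg h1 h2 h3 w hw
      have hgH : g ∈ (Hgr G a b).edgeSet := Hgr_edge_mem.mpr ⟨hg, h1⟩
      refine ⟨?_, ?_, ?_, ?_⟩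
      · intro hwa
        constructor
        · exact hc.2 g hgH s(a,y) st.eay h2 ⟨w, hw, by rw [hwa]; exact Sym2.mem_mk_left _ _⟩
        · exact hγ.2.2 g hgH (hwa ▸ hw)
      · intro hwb
        exact hαb.2.2 g hgH (hwb ▸ hw)
      · intro hwx
        exact hα.2.2 g hgH (hwx ▸ hw)
      · intro hwy
        constructor
        · exact hc.2 g hgH s(a,y) st.eay h2 ⟨w, hw, by rw [hwy]; exact Sym2.mem_mk_right _ _⟩
        · exact hc.2 g hgH s(x,y) st.exy h3 ⟨w, hw, by rw [hwy]; exact Sym2.mem_mk_right _ _⟩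
    by_cases he1 : e = s(a,b)
    · rw [if_pos he1]
      by_cases hf1 : f = s(a,b)
      · exact absurd (he1.trans hf1.symm) hne
      · rw [if_neg hf1]
        by_cases hf2 : f = s(a,y)
        · rw [if_pos hf2]
          exact hαγ
        · rw [if_neg hf2]
          by_cases hf3 : f = s(x,y)
          · -- shared vertex of s(a,b) and s(x,y): impossible
            exfalso
            subst he1 hf3
            rcases Sym2.mem_iff.mp hve with rfl | rfl <;> rcases Sym2.mem_iff.mp hvf with h | h
            · exact st.hxa h.symm
            · exact st.hyne_a h.symm
            · exact st.hxb h.symm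
            · exact st.hyne_b h.symm
          · rw [if_neg hf3]
            subst he1
            rcases Sym2.mem_iff.mp hve with rfl | rfl
            · exact fun h => ((hgen f hf hf1 hf2 hf3 v hvf).1 rfl).1 h.symm
            · exact fun h => ((hgen f hf hf1 hf2 hf3 v hvf).2.1 rfl) h.symm
    · rw [if_neg he1]
      by_cases he2 : e = s(a,y)
      · rw [if_pos he2]
        by_cases hf1 : f = s(a,b)
        · rw [if_pos hf1]
          exact hαγ.symm
        · rw [if_neg hf1]
          by_cases hf2 : f = s(a,y)
          · exact absurd (he2.trans hf2.symm) hne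
          · rw [if_neg hf2]
            by_cases hf3 : f = s(x,y)
            · rw [if_pos hf3]
              exact hαγ.symm
            · rw [if_neg hf3]
              subst he2
              rcases Sym2.mem_iff.mp hve with rfl | rfl
              · exact fun h => ((hgen f hf hf1 hf2 hf3 v hvf).1 rfl).2 h.symm
              · exact fun h => ((hgen f hf hf1 hf2 hf3 v hvf).2.2.2 rfl).2 h.symm
      · rw [if_neg he2]
        by_cases he3 : e = s(x,y)
        · rw [if_pos he3]
          by_cases hf1 : f = s(a,b)
          · exfalso
            subst he3 hf1
            rcases Sym2.mem_iff.mp hve with rfl | rfl <;> rcases Sym2.mem_iff.mp hvf with h | h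
            · exact st.hxa h
            · exact st.hxb h
            · exact st.hyne_a h
            · exact st.hyne_b h
          · rw [if_neg hf1]
            by_cases hf2 : f = s(a,y)
            · rw [if_pos hf2]
              exact hαγ
            · rw [if_neg hf2]
              by_cases hf3 : f = s(x,y)
              · exact absurd (he3.trans hf3.symm) hne
              · rw [if_neg hf3]
                subst he3
                rcases Sym2.mem_iff.mp hve with rfl | rfl
                · exact fun h => ((hgen f hf hf1 hf2 hf3 v hvf).2.2.1 rfl) h.symm
                · exact fun h => ((hgen f hf hf1 hf2 hf3 v hvf).2.2.2 rfl).1 h.symm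
        · rw [if_neg he3]
          by_cases hf1 : f = s(a,b)
          · rw [if_pos hf1]
            subst hf1
            rcases Sym2.mem_iff.mp hvf with rfl | rfl
            · exact ((hgen e he he1 he2 he3 v hve).1 rfl).1
            · exact ((hgen e he he1 he2 he3 v hve).2.1 rfl)
          · rw [if_neg hf1]
            by_cases hf2 : f = s(a,y)
            · rw [if_pos hf2]
              subst hf2
              rcases Sym2.mem_iff.mp hvf with rfl | rfl
              · exact ((hgen e he he1 he2 he3 v hve).1 rfl).2
              · exact ((hgen e he he1 he2 he3 v hve).2.2.2 rfl).2
            · rw [if_neg hf2]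
              by_cases hf3 : f = s(x,y)
              · rw [if_pos hf3]
                subst hf3
                rcases Sym2.mem_iff.mp hvf with rfl | rfl
                · exact ((hgen e he he1 he2 he3 v hve).2.2.1 rfl)
                · exact ((hgen e he he1 he2 he3 v hve).2.2.2 rfl).1
              · rw [if_neg hf3]
                exact hc.2 e (Hgr_edge_mem.mpr ⟨he, he1⟩) f (Hgr_edge_mem.mpr ⟨hf, hf1⟩) hne
                  ⟨v, hve, hvf⟩


set_option linter.unusedSectionVars false
set_option maxHeartbeats 1000000

open SimpleGraph

variable {V : Type*} [Fintype V] [DecidableEq V]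
variable {G : SimpleGraph V} [DecidableRel G.Adj] {Δ : ℕ} {a b x y : V}

lemma Setup.alpha_in_Mb (st : Setup G Δ a b x y) (c : Sym2 V → ℕ)
    (hc : IsEdgeColoring (Hgr G a b) Δ c) :
    c s(a,y) ∈ missingColors (Hgr G a b) Δ c b := by
  have hαIcc := hc.1 _ st.eay
  have hαa : c s(a,y) ∉ missingColors (Hgr G a b) Δ c a :=
    fun h => h.2.2 s(a,y) st.eay (Sym2.mem_mk_left _ _) rfl
  exact (st.partitionAB c hc hαIcc.1 hαIcc.2).resolve_left hαa

lemma Setup.L5GEN (st : Setup G Δ a b x y) (c : Sym2 V → ℕ)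
    (hc : IsEdgeColoring (Hgr G a b) Δ c)
    (hγ : c s(x,y) ∈ missingColors (Hgr G a b) Δ c a) {β : ℕ}
    (hβx : β ∈ missingColors (Hgr G a b) Δ c x)
    (hβa : β ∈ missingColors (Hgr G a b) Δ c a) : False := by
  have hαb := st.alpha_in_Mb c hc
  obtain ⟨c', hc', hpa, hpb, hpx, hmx, hma, hmb⟩ := st.doSwap c hc hβa hαb (Or.inl hβx)
  have hγβ : c s(x,y) ≠ β := hβx.2.2 _ st.exy (Sym2.mem_mk_left _ _)
  have hγα : c s(x,y) ≠ c s(a,y) := fun h =>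
    (hc.2 _ st.eay _ st.exy st.eay_ne_exy
      ⟨y, Sym2.mem_mk_right _ _, Sym2.mem_mk_right _ _⟩) h.symm
  have hαβ : c s(a,y) ≠ β := fun h => st.no_common_missing c hc hβa (h ▸ hαb)
  have h1 : c' s(x,y) = c s(x,y) := by
    rw [hpx _ st.exy (Sym2.mem_mk_left _ _), swapFn_other _ _ _ hγβ hγα]
  have h2 : c' s(a,y) = c s(a,y) := hpa _ st.eay (Sym2.mem_mk_left _ _)
  have hax : c s(a,y) ∈ missingColors (Hgr G a b) Δ c' x := by
    rw [hmx, swapFn_right _ _ (Ne.symm hαβ)]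
    exact hβx
  have hγ' : c' s(x,y) ∈ missingColors (Hgr G a b) Δ c' a := by
    rw [h1, hma]; exact hγ
  have := st.L5 c' hc' hγ'
  rw [h2] at this
  exact this hax

lemma Setup.caseA (st : Setup G Δ a b x y) (c : Sym2 V → ℕ)
    (hc : IsEdgeColoring (Hgr G a b) Δ c)
    (hγ : c s(x,y) ∈ missingColors (Hgr G a b) Δ c a) {β₁ β₂ : ℕ}
    (h1 : β₁ ∈ missingColors (Hgr G a b) Δ c x)
    (h2 : β₂ ∈ missingColors (Hgr G a b) Δ c x)
    (h12 : β₁ ≠ β₂) : False := by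
  have hb1 : β₁ ∈ missingColors (Hgr G a b) Δ c b := by
    by_cases h : β₁ ∈ missingColors (Hgr G a b) Δ c a
    · exact absurd (st.L5GEN c hc hγ h1 h) id
    · exact (st.partitionAB c hc h1.1 h1.2.1).resolve_left h
  have hb2 : β₂ ∈ missingColors (Hgr G a b) Δ c b := by
    by_cases h : β₂ ∈ missingColors (Hgr G a b) Δ c a
    · exact absurd (st.L5GEN c hc hγ h2 h) id
    · exact (st.partitionAB c hc h2.1 h2.2.1).resolve_left h
  have hαx : c s(a,y) ∉ missingColors (Hgr G a b) Δ c x := st.L5 c hc hγ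
  have hαb := st.alpha_in_Mb c hc
  have hγβ₁ : c s(x,y) ≠ β₁ := h1.2.2 _ st.exy (Sym2.mem_mk_left _ _)
  have hγβ₂ : c s(x,y) ≠ β₂ := h2.2.2 _ st.exy (Sym2.mem_mk_left _ _)
  have hαγ : c s(a,y) ≠ c s(x,y) :=
    hc.2 _ st.eay _ st.exy st.eay_ne_exy
      ⟨y, Sym2.mem_mk_right _ _, Sym2.mem_mk_right _ _⟩
  have hαβ₁ : c s(a,y) ≠ β₁ := fun h => hαx (h ▸ h1)
  have hαβ₂ : c s(a,y) ≠ β₂ := fun h => hαx (h ▸ h2)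
  set γ := c s(x,y) with hγdef
  set α := c s(a,y) with hαdef
  -- swap 1 : (γ, β₁)
  obtain ⟨c₁, hc₁, hpa₁, hpb₁, hpx₁, hmx₁, hma₁, hmb₁⟩ := st.doSwap c hc hγ hb1 (Or.inr h1)
  have hxy₁ : c₁ s(x,y) = β₁ := by
    rw [hpx₁ _ st.exy (Sym2.mem_mk_left _ _), ← hγdef, swapFn_left]
  have hay₁ : c₁ s(a,y) = α := hpa₁ _ st.eay (Sym2.mem_mk_left _ _)
  have mγ₁ : γ ∈ missingColors (Hgr G a b) Δ c₁ x := by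
    rw [hmx₁, swapFn_left]; exact h1
  have mβ₂₁ : β₂ ∈ missingColors (Hgr G a b) Δ c₁ x := by
    rw [hmx₁, swapFn_other _ _ _ (Ne.symm hγβ₂) (Ne.symm h12)]; exact h2
  have mα₁ : α ∉ missingColors (Hgr G a b) Δ c₁ x := by
    rw [hmx₁, swapFn_other _ _ _ hαγ hαβ₁]; exact hαx
  -- swap 2 : (γ, α)
  obtain ⟨c₂, hc₂, hpa₂, hpb₂, hpx₂, hmx₂, hma₂, hmb₂⟩ :=
    st.doSwap c₁ hc₁ (τ := γ) (σ := α) (by rw [hma₁]; exact hγ) (by rw [hmb₁]; exact hαb)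
      (Or.inl mγ₁)
  have hxy₂ : c₂ s(x,y) = β₁ := by
    rw [hpx₂ _ st.exy (Sym2.mem_mk_left _ _), hxy₁,
      swapFn_other _ _ _ (Ne.symm hγβ₁) (Ne.symm hαβ₁)]
  have hay₂ : c₂ s(a,y) = α := by
    rw [hpa₂ _ st.eay (Sym2.mem_mk_left _ _), hay₁]
  have mα₂ : α ∈ missingColors (Hgr G a b) Δ c₂ x := by
    rw [hmx₂, swapFn_right _ _ (Ne.symm hαγ)]; exact mγ₁
  have mβ₂₂ : β₂ ∈ missingColors (Hgr G a b) Δ c₂ x := by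
    rw [hmx₂, swapFn_other _ _ _ (Ne.symm hγβ₂) (Ne.symm hαβ₂)]; exact mβ₂₁
  -- swap 3 : (γ, β₂)
  obtain ⟨c₃, hc₃, hpa₃, hpb₃, hpx₃, hmx₃, hma₃, hmb₃⟩ :=
    st.doSwap c₂ hc₂ (τ := γ) (σ := β₂) (by rw [hma₂, hma₁]; exact hγ)
      (by rw [hmb₂, hmb₁]; exact hb2) (Or.inr mβ₂₂)
  have hxy₃ : c₃ s(x,y) = β₁ := by
    rw [hpx₃ _ st.exy (Sym2.mem_mk_left _ _), hxy₂,
      swapFn_other _ _ _ (Ne.symm hγβ₁) h12]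
  have hay₃ : c₃ s(a,y) = α := by
    rw [hpa₃ _ st.eay (Sym2.mem_mk_left _ _), hay₂]
  have mγ₃ : γ ∈ missingColors (Hgr G a b) Δ c₃ x := by
    rw [hmx₃, swapFn_left]; exact mβ₂₂
  have mα₃ : α ∈ missingColors (Hgr G a b) Δ c₃ x := by
    rw [hmx₃, swapFn_other _ _ _ hαγ hαβ₂]; exact mα₂
  -- swap 4 : (γ, β₁)
  obtain ⟨c₄, hc₄, hpa₄, hpb₄, hpx₄, hmx₄, hma₄, hmb₄⟩ :=
    st.doSwap c₃ hc₃ (τ := γ) (σ := β₁) (by rw [hma₃, hma₂, hma₁]; exact hγ)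
      (by rw [hmb₃, hmb₂, hmb₁]; exact hb1) (Or.inl mγ₃)
  have hxy₄ : c₄ s(x,y) = γ := by
    rw [hpx₄ _ st.exy (Sym2.mem_mk_left _ _), hxy₃]
    exact swapFn_right _ _ hγβ₁
  have hay₄ : c₄ s(a,y) = α := by
    rw [hpa₄ _ st.eay (Sym2.mem_mk_left _ _), hay₃]
  have mα₄ : α ∈ missingColors (Hgr G a b) Δ c₄ x := by
    rw [hmx₄, swapFn_other _ _ _ hαγ hαβ₁]; exact mα₃
  have hγ₄ : c₄ s(x,y) ∈ missingColors (Hgr G a b) Δ c₄ a := by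
    rw [hxy₄, hma₄, hma₃, hma₂, hma₁]; exact hγ
  have := st.L5 c₄ hc₄ hγ₄
  rw [hay₄] at this
  exact this mα₄

lemma Setup.bridge (st : Setup G Δ a b x y) (c : Sym2 V → ℕ)
    (hc : IsEdgeColoring (Hgr G a b) Δ c)
    (hγb : c s(x,y) ∈ missingColors (Hgr G a b) Δ c b) {τ β : ℕ}
    (hτx : τ ∈ missingColors (Hgr G a b) Δ c x)
    (hτa : τ ∈ missingColors (Hgr G a b) Δ c a)
    (hβx : β ∈ missingColors (Hgr G a b) Δ c x)
    (hβτ : β ≠ τ) : False := by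
  obtain ⟨c', hc', hpa, hpb, hpx, hmx, hma, hmb⟩ := st.doSwap c hc hτa hγb (Or.inl hτx)
  have hγτ : c s(x,y) ≠ τ := hτx.2.2 _ st.exy (Sym2.mem_mk_left _ _)
  have hγβ : c s(x,y) ≠ β := hβx.2.2 _ st.exy (Sym2.mem_mk_left _ _)
  have e1 : c' s(x,y) = τ := by
    rw [hpx _ st.exy (Sym2.mem_mk_left _ _)]
    exact swapFn_right _ _ (Ne.symm hγτ)
  have m1 : c s(x,y) ∈ missingColors (Hgr G a b) Δ c' x := by
    rw [hmx, swapFn_right _ _ (Ne.symm hγτ)]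
    exact hτx
  have m2 : β ∈ missingColors (Hgr G a b) Δ c' x := by
    rw [hmx, swapFn_other _ _ _ hβτ (Ne.symm hγβ)]
    exact hβx
  have hγ' : c' s(x,y) ∈ missingColors (Hgr G a b) Δ c' a := by
    rw [e1, hma]; exact hτa
  exact st.caseA c' hc' hγ' m1 m2 hγβ

lemma Setup.missing_a_nonempty (st : Setup G Δ a b x y) (c : Sym2 V → ℕ)
    (hc : IsEdgeColoring (Hgr G a b) Δ c) :
    ∃ τ, τ ∈ missingColors (Hgr G a b) Δ c a := by
  obtain ⟨Fa, hFa, hca⟩ := missing_card c hc a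
  have h1 := st.degH_a
  have h2 := st.hdega
  have hpos : 0 < Fa.card := by omega
  obtain ⟨τ, hτ⟩ := Finset.card_pos.mp hpos
  exact ⟨τ, (hFa τ).mp hτ⟩

lemma Setup.two_missing_false (st : Setup G Δ a b x y) (c : Sym2 V → ℕ)
    (hc : IsEdgeColoring (Hgr G a b) Δ c) {β₁ β₂ : ℕ}
    (h1 : β₁ ∈ missingColors (Hgr G a b) Δ c x)
    (h2 : β₂ ∈ missingColors (Hgr G a b) Δ c x)
    (h12 : β₁ ≠ β₂) : False := by
  have hγIcc := hc.1 _ st.exy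
  rcases st.partitionAB c hc hγIcc.1 hγIcc.2 with hγa | hγb
  · exact st.caseA c hc hγa h1 h2 h12
  · by_cases hex : ∃ τ, τ ∈ missingColors (Hgr G a b) Δ c x ∧
        τ ∈ missingColors (Hgr G a b) Δ c a
    · obtain ⟨τ, hτx, hτa⟩ := hex
      by_cases hb : β₁ = τ
      · exact st.bridge c hc hγb hτx hτa h2 (by rw [← hb]; exact h12.symm)
      · exact st.bridge c hc hγb hτx hτa h1 hb
    · push_neg at hex
      have hb1 : β₁ ∈ missingColors (Hgr G a b) Δ c b :=
        (st.partitionAB c hc h1.1 h1.2.1).resolve_left (hex β₁ h1)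
      obtain ⟨τ₀, hτ₀⟩ := st.missing_a_nonempty c hc
      obtain ⟨c', hc', hpa, hpb, hpx, hmx, hma, hmb⟩ := st.doSwap c hc hτ₀ hb1 (Or.inr h1)
      have hτ₀β₁ : τ₀ ≠ β₁ := fun h => hex β₁ h1 (h ▸ hτ₀)
      have m1 : τ₀ ∈ missingColors (Hgr G a b) Δ c' x := by
        rw [hmx, swapFn_left]; exact h1
      have hβ₂τ₀ : β₂ ≠ τ₀ := fun h => hex β₂ h2 (h ▸ hτ₀)
      have m2 : β₂ ∈ missingColors (Hgr G a b) Δ c' x := by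
        rw [hmx, swapFn_other _ _ _ hβ₂τ₀ h12.symm]; exact h2
      have hγτ₀ : c s(x,y) ≠ τ₀ := fun h => st.no_common_missing c hc hτ₀ (h ▸ hγb)
      have hγβ₁ : c s(x,y) ≠ β₁ := h1.2.2 _ st.exy (Sym2.mem_mk_left _ _)
      have e1 : c' s(x,y) = c s(x,y) := by
        rw [hpx _ st.exy (Sym2.mem_mk_left _ _), swapFn_other _ _ _ hγτ₀ hγβ₁]
      have hγb' : c' s(x,y) ∈ missingColors (Hgr G a b) Δ c' b := by
        rw [e1, hmb]; exact hγb
      exact st.bridge c' hc' hγb' m1 (by rw [hma]; exact hτ₀) m2 hβ₂τ₀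

lemma Setup.kill1 (st : Setup G Δ a b x y) (c : Sym2 V → ℕ)
    (hc : IsEdgeColoring (Hgr G a b) Δ c)
    (hγ : c s(x,y) ∈ missingColors (Hgr G a b) Δ c a) {β : ℕ}
    (hβ : β ∈ missingColors (Hgr G a b) Δ c x)
    (h2a : ∃ s₁ s₂, s₁ ∈ missingColors (Hgr G a b) Δ c a ∧
      s₂ ∈ missingColors (Hgr G a b) Δ c a ∧ s₁ ≠ s₂) : False := by
  by_cases hba : β ∈ missingColors (Hgr G a b) Δ c a
  · exact st.L5GEN c hc hγ hβ hba
  · have hβb : β ∈ missingColors (Hgr G a b) Δ c b :=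
      (st.partitionAB c hc hβ.1 hβ.2.1).resolve_left hba
    have hαx : c s(a,y) ∉ missingColors (Hgr G a b) Δ c x := st.L5 c hc hγ
    obtain ⟨s₁, s₂, hs₁, hs₂, hss⟩ := h2a
    obtain ⟨σ, hσa, hσγ⟩ : ∃ σ, σ ∈ missingColors (Hgr G a b) Δ c a ∧ σ ≠ c s(x,y) := by
      by_cases h : s₁ = c s(x,y)
      · exact ⟨s₂, hs₂, by rw [← h]; exact hss.symm⟩
      · exact ⟨s₁, hs₁, h⟩
    obtain ⟨c', hc', hpa, hpb, hpx, hmx, hma, hmb⟩ := st.doSwap c hc hσa hβb (Or.inr hβ)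
    have m1 : σ ∈ missingColors (Hgr G a b) Δ c' x := by
      rw [hmx, swapFn_left]; exact hβ
    have hγβ : c s(x,y) ≠ β := hβ.2.2 _ st.exy (Sym2.mem_mk_left _ _)
    have e1 : c' s(x,y) = c s(x,y) := by
      rw [hpx _ st.exy (Sym2.mem_mk_left _ _), swapFn_other _ _ _ (Ne.symm hσγ) hγβ]
    have hγ' : c' s(x,y) ∈ missingColors (Hgr G a b) Δ c' a := by
      rw [e1, hma]; exact hγ
    exact st.L5GEN c' hc' hγ' m1 (by rw [hma]; exact hσa)

lemma Setup.kill2pos (st : Setup G Δ a b x y) (c : Sym2 V → ℕ)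
    (hc : IsEdgeColoring (Hgr G a b) Δ c)
    (hγb : c s(x,y) ∈ missingColors (Hgr G a b) Δ c b) {τ : ℕ}
    (hτx : τ ∈ missingColors (Hgr G a b) Δ c x)
    (hτa : τ ∈ missingColors (Hgr G a b) Δ c a)
    (h2a : ∃ s₁ s₂, s₁ ∈ missingColors (Hgr G a b) Δ c a ∧
      s₂ ∈ missingColors (Hgr G a b) Δ c a ∧ s₁ ≠ s₂) : False := by
  obtain ⟨c', hc', hpa, hpb, hpx, hmx, hma, hmb⟩ := st.doSwap c hc hτa hγb (Or.inl hτx)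
  have hγτ : c s(x,y) ≠ τ := hτx.2.2 _ st.exy (Sym2.mem_mk_left _ _)
  have e1 : c' s(x,y) = τ := by
    rw [hpx _ st.exy (Sym2.mem_mk_left _ _)]
    exact swapFn_right _ _ (Ne.symm hγτ)
  have hγ' : c' s(x,y) ∈ missingColors (Hgr G a b) Δ c' a := by
    rw [e1, hma]; exact hτa
  have m1 : c s(x,y) ∈ missingColors (Hgr G a b) Δ c' x := by
    rw [hmx, swapFn_right _ _ (Ne.symm hγτ)]
    exact hτx
  apply st.kill1 c' hc' hγ' m1
  rw [hma]
  exact h2a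

lemma Setup.one_missing_false (st : Setup G Δ a b x y) (c : Sym2 V → ℕ)
    (hc : IsEdgeColoring (Hgr G a b) Δ c)
    (h2a : ∃ s₁ s₂, s₁ ∈ missingColors (Hgr G a b) Δ c a ∧
      s₂ ∈ missingColors (Hgr G a b) Δ c a ∧ s₁ ≠ s₂)
    {β : ℕ} (hβ : β ∈ missingColors (Hgr G a b) Δ c x) : False := by
  have hγIcc := hc.1 _ st.exy
  rcases st.partitionAB c hc hγIcc.1 hγIcc.2 with hγa | hγb
  · exact st.kill1 c hc hγa hβ h2a
  · by_cases hex : ∃ τ, τ ∈ missingColors (Hgr G a b) Δ c x ∧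
        τ ∈ missingColors (Hgr G a b) Δ c a
    · obtain ⟨τ, hτx, hτa⟩ := hex
      exact st.kill2pos c hc hγb hτx hτa h2a
    · push_neg at hex
      have hβb : β ∈ missingColors (Hgr G a b) Δ c b :=
        (st.partitionAB c hc hβ.1 hβ.2.1).resolve_left (hex β hβ)
      obtain ⟨τ₀, hτ₀⟩ := st.missing_a_nonempty c hc
      obtain ⟨c', hc', hpa, hpb, hpx, hmx, hma, hmb⟩ := st.doSwap c hc hτ₀ hβb (Or.inr hβ)
      have m1 : τ₀ ∈ missingColors (Hgr G a b) Δ c' x := by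
        rw [hmx, swapFn_left]; exact hβ
      have hγτ₀ : c s(x,y) ≠ τ₀ := fun h => st.no_common_missing c hc hτ₀ (h ▸ hγb)
      have hγβ : c s(x,y) ≠ β := hβ.2.2 _ st.exy (Sym2.mem_mk_left _ _)
      have e1 : c' s(x,y) = c s(x,y) := by
        rw [hpx _ st.exy (Sym2.mem_mk_left _ _), swapFn_other _ _ _ hγτ₀ hγβ]
      have hγb' : c' s(x,y) ∈ missingColors (Hgr G a b) Δ c' b := by
        rw [e1, hmb]; exact hγb
      apply st.kill2pos c' hc' hγb' m1 (by rw [hma]; exact hτ₀)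
      rw [hma]
      exact h2a

lemma Setup.engine (st : Setup G Δ a b x y) (hdx : G.degree x ≤ Δ)
    (hex : ∃ c, IsEdgeColoring (Hgr G a b) Δ c) :
    Δ - 1 ≤ G.degree x ∧ (G.degree a < Δ → G.degree x = Δ) := by
  obtain ⟨c, hc⟩ := hex
  obtain ⟨F, hF, hcard⟩ := missing_card c hc x
  have hdegx := st.degH_x
  constructor
  · have hle : F.card ≤ 1 := by
      by_contra h
      push_neg at h
      obtain ⟨β₁, hb1, β₂, hb2, hne⟩ := Finset.one_lt_card.mp h
      exact st.two_missing_false c hc ((hF β₁).mp hb1) ((hF β₂).mp hb2) hne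
    omega
  · intro hda
    have h2a : ∃ s₁ s₂, s₁ ∈ missingColors (Hgr G a b) Δ c a ∧
        s₂ ∈ missingColors (Hgr G a b) Δ c a ∧ s₁ ≠ s₂ := by
      obtain ⟨Fa, hFa, hca⟩ := missing_card c hc a
      have h1 := st.degH_a
      have h2 : 1 < Fa.card := by omega
      obtain ⟨s₁, hs₁, s₂, hs₂, hss⟩ := Finset.one_lt_card.mp h2
      exact ⟨s₁, s₂, (hFa _).mp hs₁, (hFa _).mp hs₂, hss⟩
    have hzero : F.card = 0 := by
      by_contra h
      obtain ⟨β, hβ⟩ := Finset.card_pos.mp (Nat.pos_of_ne_zero h)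
      exact st.one_missing_false c hc h2a ((hF β).mp hβ)
    omega


set_option linter.unusedSectionVars false

open SimpleGraph

variable {V : Type*} [Fintype V] [DecidableEq V]

lemma weaken {H : SimpleGraph V} {k Δ : ℕ} (h : k ≤ Δ) {c : Sym2 V → ℕ}
    (hc : IsEdgeColoring H k c) : IsEdgeColoring H Δ c :=
  ⟨fun e he => ⟨(hc.1 e he).1, le_trans (hc.1 e he).2 h⟩, hc.2⟩

lemma exists_col (H : SimpleGraph V) : ∃ k c, IsEdgeColoring H k c := by
  classical
  refine ⟨Fintype.card (Sym2 V), fun e => (Fintype.equivFin (Sym2 V) e).val + 1, ?_, ?_⟩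
  · intro e _
    dsimp only
    constructor
    · omega
    · have := (Fintype.equivFin (Sym2 V) e).isLt
      omega
  · intro e _ f _ hne _ hEq
    apply hne
    dsimp only at hEq
    have hv : ((Fintype.equivFin (Sym2 V)) e).val = ((Fintype.equivFin (Sym2 V)) f).val :=
      Nat.add_right_cancel hEq
    exact (Fintype.equivFin (Sym2 V)).injective (Fin.ext hv)

lemma mid_of_dist_two {G : SimpleGraph V} {x z : V} (hz : G.dist x z = 2) :
    ∃ w, G.Adj x w ∧ G.Adj w z := by
  have hreach : G.Reachable x z := by
    by_contra hn
    rw [SimpleGraph.dist_eq_zero_of_not_reachable hn] at hz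
    omega
  obtain ⟨p, hp⟩ := hreach.exists_walk_length_eq_dist
  rw [hz] at hp
  cases p with
  | nil => simp at hp
  | cons h q =>
    cases q with
    | nil => simp at hp
    | cons h' r =>
      have hr : r.length = 0 := by
        simp only [SimpleGraph.Walk.length_cons] at hp
        omega
      have := SimpleGraph.Walk.eq_of_length_eq_zero hr
      subst this
      exact ⟨_, h, h'⟩


end StK

/-- Let `G` be an `n`-vertex Class 2 graph with maximum degree `Δ` having
a full-deficiency pair `(a,b)` with `ab` a critical edge. Then every vertex
`x ∈ V(G) \ {a,b}` with `dist_G(x, {a,b}) = 2` has `d_G(x) ≥ Δ - 1`; furthermore, if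
`d_G(a) < Δ` and `d_G(b) < Δ`, then `d_G(x) = Δ`. -/
theorem fullDeficiencyPair_distance_two_degree
    {V : Type*} [Fintype V] [DecidableEq V]
    (n Δ : ℕ) (G : SimpleGraph V) [DecidableRel G.Adj]
    (hcard : Fintype.card V = n)
    (hΔ : G.maxDegree = Δ) (hclass2 : chromIndex G = Δ + 1)
    (a b : V) (hab : G.Adj a b) (hfd : G.degree a + G.degree b = Δ + 2)
    (hcrit : IsCriticalEdge G (s(a, b)))
    (x : V) (hxa : x ≠ a) (hxb : x ≠ b)
    (hdist : min (G.dist x a) (G.dist x b) = 2) :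
    Δ - 1 ≤ G.degree x ∧ ((G.degree a < Δ ∧ G.degree b < Δ) → G.degree x = Δ) := by
  classical
  have hNoC : ¬ ∃ c, IsEdgeColoring G Δ c := by
    rintro ⟨c, hc⟩
    have h1 : chromIndex G ≤ Δ := Nat.sInf_le ⟨c, hc⟩
    rw [hclass2] at h1
    omega
  have hlt : chromIndex (G.deleteEdges {s(a,b)}) < Δ + 1 := by
    have := hcrit.2
    rwa [hclass2] at this
  have hSne : {k | ∃ c, IsEdgeColoring (G.deleteEdges {s(a,b)}) k c}.Nonempty := by
    obtain ⟨k, c, hc⟩ := StK.exists_col (G.deleteEdges {s(a,b)})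
    exact ⟨k, c, hc⟩
  have hmem := Nat.sInf_mem hSne
  obtain ⟨c₀, hc₀⟩ := hmem
  have hex : ∃ c, IsEdgeColoring (StK.Hgr G a b) Δ c := by
    refine ⟨c₀, StK.weaken ?_ hc₀⟩
    exact Nat.lt_succ_iff.mp hlt
  have hdega : G.degree a ≤ Δ := hΔ ▸ G.degree_le_maxDegree a
  have hdegb : G.degree b ≤ Δ := hΔ ▸ G.degree_le_maxDegree b
  have hdegx : G.degree x ≤ Δ := hΔ ▸ G.degree_le_maxDegree x
  have hge_a : 2 ≤ G.dist x a := by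
    have h := min_le_left (G.dist x a) (G.dist x b)
    rw [hdist] at h
    exact h
  have hge_b : 2 ≤ G.dist x b := by
    have h := min_le_right (G.dist x a) (G.dist x b)
    rw [hdist] at h
    exact h
  have hnxa : ¬ G.Adj x a := by
    intro h
    have hw := SimpleGraph.dist_le (SimpleGraph.Walk.cons h SimpleGraph.Walk.nil)
    simp [SimpleGraph.Walk.length_cons, SimpleGraph.Walk.length_nil] at hw
    omega
  have hnxb : ¬ G.Adj x b := by
    intro h
    have hw := SimpleGraph.dist_le (SimpleGraph.Walk.cons h SimpleGraph.Walk.nil)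
    simp [SimpleGraph.Walk.length_cons, SimpleGraph.Walk.length_nil] at hw
    omega
  have hcase : G.dist x a = 2 ∨ G.dist x b = 2 := by
    rcases le_total (G.dist x a) (G.dist x b) with h | h
    · left; rw [min_eq_left h] at hdist; exact hdist
    · right; rw [min_eq_right h] at hdist; exact hdist
  rcases hcase with hda2 | hdb2
  · obtain ⟨y, hxy, hya0⟩ := StK.mid_of_dist_two hda2
    have st : StK.Setup G Δ a b x y :=
      ⟨hab, hya0, hxy, hxa, hxb, hnxa, hnxb, hfd, hdega, hdegb, hNoC⟩
    obtain ⟨P1, P2⟩ := st.engine hdegx hex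
    exact ⟨P1, fun h => P2 h.1⟩
  · obtain ⟨y, hxy, hyb0⟩ := StK.mid_of_dist_two hdb2
    have st : StK.Setup G Δ b a x y :=
      ⟨hab.symm, hyb0, hxy, hxb, hxa, hnxb, hnxa, by omega, hdegb, hdega, hNoC⟩
    have hex' : ∃ c, IsEdgeColoring (StK.Hgr G b a) Δ c := by
      have hHeq : StK.Hgr G b a = StK.Hgr G a b := by
        rw [StK.Hgr, StK.Hgr, Sym2.eq_swap]
      rw [hHeq]
      exact hex
    obtain ⟨P1, P2⟩ := st.engine hdegx hex'
    exact ⟨P1, fun h => P2 h.2⟩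
end

section
/- Let G be a Class 2 simple graph with maximum degree Δ, let e = v₀v₁ ∈ E(G) be a critical edge, and let φ ∈ C^Δ(G−e). If K=(v₀, v₀v₁, v₁, v₁v₂, v₂, v₂v₃, v₃) is a Kierstead path with respect to e and φ, then |φ̄(v₃) ∩ (φ̄(v₀) ∪ φ̄(v₁))| ≤ 1. -/
set_option linter.unusedSectionVars false
set_option maxHeartbeats 1000000

namespace KPwork
open SimpleGraph

variable {V : Type*} [Fintype V] [DecidableEq V] {Δ : ℕ} {G : SimpleGraph V} [DecidableRel G.Adj]

-- abbreviations
local notation "Del" f => SimpleGraph.deleteEdges G {f}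

lemma mem_del_edgeSet {f e : Sym2 V} :
    e ∈ (G.deleteEdges {f}).edgeSet ↔ e ∈ G.edgeSet ∧ e ≠ f := by
  rw [SimpleGraph.edgeSet_deleteEdges]; simp [Set.mem_diff]

lemma chromIndex_le {k : ℕ} {c : Sym2 V → ℕ} (hc : IsEdgeColoring G k c) :
    chromIndex G ≤ k := Nat.sInf_le ⟨c, hc⟩

/-- B2: extension lemma -/
lemma extend_false (hclass2 : chromIndex G = Δ + 1) {x y : V}
    (hf : s(x, y) ∈ G.edgeSet) {c : Sym2 V → ℕ}
    (hc : IsEdgeColoring (G.deleteEdges {s(x, y)}) Δ c) {δ : ℕ}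
    (hδx : δ ∈ missingColors (G.deleteEdges {s(x, y)}) Δ c x)
    (hδy : δ ∈ missingColors (G.deleteEdges {s(x, y)}) Δ c y) : False := by
  set f : Sym2 V := s(x, y) with hfdef
  set c' : Sym2 V → ℕ := fun e => if e = f then δ else c e with hc'
  have hcol : IsEdgeColoring G Δ c' := by
    constructor
    · intro e he
      by_cases h : e = f
      · simp only [hc', h, if_pos rfl]
        exact ⟨hδx.1, hδx.2.1⟩
      · simp only [hc', if_neg h]
        exact hc.1 e (mem_del_edgeSet.2 ⟨he, h⟩)
    · intro e he g hg hne hshare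
      obtain ⟨v, hve, hvg⟩ := hshare
      by_cases h1 : e = f
      · by_cases h2 : g = f
        · exact absurd (h1.trans h2.symm) hne
        · simp only [hc', if_pos h1, if_neg h2]
          have hgd : g ∈ (G.deleteEdges {f}).edgeSet := mem_del_edgeSet.2 ⟨hg, h2⟩
          have hv : v = x ∨ v = y := by
            subst h1; rw [hfdef] at hve; exact Sym2.mem_iff.1 hve
          rcases hv with rfl | rfl
          · exact fun hh => hδx.2.2 g hgd hvg hh.symm
          · exact fun hh => hδy.2.2 g hgd hvg hh.symm
      · by_cases h2 : g = f
        · simp only [hc', if_neg h1, if_pos h2]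
          have hed : e ∈ (G.deleteEdges {f}).edgeSet := mem_del_edgeSet.2 ⟨he, h1⟩
          have hv : v = x ∨ v = y := by
            subst h2; rw [hfdef] at hvg; exact Sym2.mem_iff.1 hvg
          rcases hv with rfl | rfl
          · exact hδx.2.2 e hed hve
          · exact hδy.2.2 e hed hve
        · simp only [hc', if_neg h1, if_neg h2]
          exact hc.2 e (mem_del_edgeSet.2 ⟨he, h1⟩) g (mem_del_edgeSet.2 ⟨hg, h2⟩) hne ⟨v, hve, hvg⟩
  have := chromIndex_le hcol
  omega

/-- B3: there is a missing color at each endpoint of the uncolored edge. -/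
lemma missing_nonempty (hΔ : G.maxDegree = Δ) {f : Sym2 V} (hf : f ∈ G.edgeSet)
    {x : V} (hx : x ∈ f) {c : Sym2 V → ℕ}
    (hc : IsEdgeColoring (G.deleteEdges {f}) Δ c) :
    (missingColors (G.deleteEdges {f}) Δ c x).Nonempty := by
  classical
  set H := G.deleteEdges {f} with hH
  obtain ⟨y, rfl⟩ : ∃ y, f = s(x, y) := by
    induction f with
    | _ a b =>
      rcases Sym2.mem_iff.1 hx with rfl | rfl
      · exact ⟨b, rfl⟩
      · exact ⟨a, Sym2.eq_swap⟩
  have hsub : H.neighborFinset x ⊆ G.neighborFinset x := by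
    intro u hu
    rw [SimpleGraph.mem_neighborFinset] at hu ⊢
    exact ((SimpleGraph.deleteEdges_le {s(x,y)}) hu)
  have hy : y ∈ G.neighborFinset x := by
    rw [SimpleGraph.mem_neighborFinset]; exact hf
  have hyn : y ∉ H.neighborFinset x := by
    rw [SimpleGraph.mem_neighborFinset]
    have hne : x ≠ y := G.ne_of_adj ((SimpleGraph.mem_edgeSet G).mp hf)
    intro hadj
    exact hadj.2 (by simp [hne])
  have hlt : H.degree x < G.degree x := by
    rw [← SimpleGraph.card_neighborFinset_eq_degree, ← SimpleGraph.card_neighborFinset_eq_degree]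
    exact Finset.card_lt_card (Finset.ssubset_iff_of_subset hsub |>.2 ⟨y, hy, hyn⟩)
  have hdeg : H.degree x < Δ := lt_of_lt_of_le hlt (hΔ ▸ G.degree_le_maxDegree x)
  set T : Finset ℕ := (H.incidenceFinset x).image c with hT
  have hTcard : T.card < Δ := by
    calc T.card ≤ (H.incidenceFinset x).card := Finset.card_image_le
    _ = H.degree x := H.card_incidenceFinset_eq_degree x
    _ < Δ := hdeg
  have : T.card < (Finset.Icc 1 Δ).card := by
    rwa [Nat.card_Icc, Nat.add_sub_cancel]
  have hns : ¬ (Finset.Icc 1 Δ ⊆ T) := fun h => absurd (Finset.card_le_card h) (by omega)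
  obtain ⟨δ, hδI, hδT⟩ := Finset.not_subset.1 hns
  rw [Finset.mem_Icc] at hδI
  refine ⟨δ, hδI.1, hδI.2, ?_⟩
  intro e he hxe hce
  exact hδT (Finset.mem_image.2 ⟨e, (SimpleGraph.mem_incidenceFinset (G := H) (v := x) e).2 ⟨he, hxe⟩, hce⟩)


section swapblock
variable {V : Type*} [Fintype V] [DecidableEq V] {Δ : ℕ} {G : SimpleGraph V} [DecidableRel G.Adj]

/-- Swap colors `a` and `b` on all edges with an endpoint in `C`. -/
noncomputable def swapc (c : Sym2 V → ℕ) (a b : ℕ) (C : Set V) : Sym2 V → ℕ :=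
  fun e =>
    letI : Decidable ((c e = a ∨ c e = b) ∧ (∃ v ∈ C, v ∈ e)) := Classical.propDecidable _
    if (c e = a ∨ c e = b) ∧ (∃ v ∈ C, v ∈ e) then (if c e = a then b else a) else c e

variable {f : Sym2 V} {c : Sym2 V → ℕ} {a b : ℕ} {C : Set V}

/-- closure hypothesis: `C` is a union of components of the `(a,b)`-chain graph. -/
def ChainClosed (G' : SimpleGraph V) (c : Sym2 V → ℕ) (a b : ℕ) (C : Set V) : Prop :=
  ∀ ⦃x y : V⦄, (chainGraph G' c a b).Adj x y → (x ∈ C ↔ y ∈ C)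

lemma chain_closed_reach (H : SimpleGraph V) (z : V) :
    ChainClosed H c a b {u | (chainGraph H c a b).Reachable u z} := by
  intro x y hadj
  exact ⟨fun h => (hadj.symm.reachable).trans h, fun h => (hadj.reachable).trans h⟩

lemma swap_closed {H : SimpleGraph V} (hC : ChainClosed H c a b C) {e : Sym2 V}
    (he : e ∈ H.edgeSet) (hcol : c e = a ∨ c e = b) (hex : ∃ v ∈ C, v ∈ e) :
    ∀ v ∈ e, v ∈ C := by
  induction e with
  | _ x y =>
    have hadj : (chainGraph H c a b).Adj x y := ⟨(SimpleGraph.mem_edgeSet H).mp he, hcol⟩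
    obtain ⟨u, huC, hue⟩ := hex
    have hxy : x ∈ C ∧ y ∈ C := by
      rcases Sym2.mem_iff.1 hue with rfl | rfl
      · exact ⟨huC, (hC hadj).1 huC⟩
      · exact ⟨(hC hadj).2 huC, huC⟩
    intro v hv
    rcases Sym2.mem_iff.1 hv with rfl | rfl
    · exact hxy.1
    · exact hxy.2

lemma swapc_eq_of_not_chain {e : Sym2 V} (h1 : c e ≠ a) (h2 : c e ≠ b) :
    swapc c a b C e = c e := by
  unfold swapc
  rw [if_neg]
  rintro ⟨h, -⟩
  rcases h with h | h
  · exact h1 h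
  · exact h2 h

lemma swapc_eq_of_not_mem {e : Sym2 V} (h : ∀ v ∈ e, v ∉ C) :
    swapc c a b C e = c e := by
  unfold swapc
  rw [if_neg]
  rintro ⟨-, u, huC, hue⟩
  exact h u hue huC

lemma swapc_eq_b {e : Sym2 V} (h1 : c e = a) (hex : ∃ v ∈ C, v ∈ e) :
    swapc c a b C e = b := by
  unfold swapc
  rw [if_pos ⟨Or.inl h1, hex⟩, if_pos h1]

lemma swapc_eq_a (hab : a ≠ b) {e : Sym2 V} (h1 : c e = b) (hex : ∃ v ∈ C, v ∈ e) :
    swapc c a b C e = a := by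
  unfold swapc
  rw [if_pos ⟨Or.inr h1, hex⟩, if_neg (by rw [h1]; exact fun h => hab h.symm)]

lemma swapc_mem_pair {e : Sym2 V} :
    swapc c a b C e = c e ∨ (swapc c a b C e = a ∨ swapc c a b C e = b) ∧
      (c e = a ∨ c e = b) := by
  unfold swapc
  split
  · rename_i h
    refine Or.inr ⟨?_, h.1⟩
    split
    · exact Or.inr rfl
    · exact Or.inl rfl
  · exact Or.inl rfl

lemma swap_proper {H : SimpleGraph V} (hc : IsEdgeColoring H Δ c)
    (ha1 : 1 ≤ a) (ha2 : a ≤ Δ) (hb1 : 1 ≤ b) (hb2 : b ≤ Δ) (hab : a ≠ b)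
    (hC : ChainClosed H c a b C) :
    IsEdgeColoring H Δ (swapc c a b C) := by
  constructor
  · intro e he
    rcases swapc_mem_pair (c := c) (a := a) (b := b) (C := C) (e := e) with h | ⟨h, -⟩
    · rw [h]; exact hc.1 e he
    · rcases h with h | h <;> rw [h]
      · exact ⟨ha1, ha2⟩
      · exact ⟨hb1, hb2⟩
  · intro e he g hg hne hsh
    obtain ⟨v, hve, hvg⟩ := hsh
    have horig := hc.2 e he g hg hne ⟨v, hve, hvg⟩
    by_cases che : (c e = a ∨ c e = b) ∧ (∃ u ∈ C, u ∈ e)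
    · have hvC : v ∈ C := swap_closed hC he che.1 che.2 v hve
      by_cases chg : (c g = a ∨ c g = b) ∧ (∃ u ∈ C, u ∈ g)
      · -- both swapped
        rcases che.1 with h1 | h1 <;> rcases chg.1 with h2 | h2
        · exact absurd (h1.trans h2.symm) horig
        · rw [swapc_eq_b h1 che.2, swapc_eq_a hab h2 chg.2]
          exact fun h => hab h.symm
        · rw [swapc_eq_a hab h1 che.2, swapc_eq_b h2 chg.2]
          exact hab
        · exact absurd (h1.trans h2.symm) horig
      · -- e swapped, g not
        have hgnot : ¬(c g = a ∨ c g = b) := by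
          intro h
          exact chg ⟨h, v, hvC, hvg⟩
        push_neg at hgnot
        have hge : swapc c a b C g = c g := swapc_eq_of_not_chain hgnot.1 hgnot.2
        rw [hge]
        rcases che.1 with h1 | h1
        · rw [swapc_eq_b h1 che.2]; exact fun h => hgnot.2 h.symm
        · rw [swapc_eq_a hab h1 che.2]; exact fun h => hgnot.1 h.symm
    · have hee : swapc c a b C e = c e := by
        unfold swapc; rw [if_neg che]
      by_cases chg : (c g = a ∨ c g = b) ∧ (∃ u ∈ C, u ∈ g)
      · have hvC : v ∈ C := swap_closed hC hg chg.1 chg.2 v hvg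
        have henot : ¬(c e = a ∨ c e = b) := by
          intro h
          exact che ⟨h, v, hvC, hve⟩
        push_neg at henot
        rw [hee]
        rcases chg.1 with h2 | h2
        · rw [swapc_eq_b h2 chg.2]; exact henot.2
        · rw [swapc_eq_a hab h2 chg.2]; exact henot.1
      · have hgg : swapc c a b C g = c g := by
          unfold swapc; rw [if_neg chg]
        rw [hee, hgg]; exact horig

lemma swap_missing_of_not_mem {H : SimpleGraph V} (hC : ChainClosed H c a b C)
    {v : V} (hv : v ∉ C) :
    missingColors H Δ (swapc c a b C) v = missingColors H Δ c v := by
  have key : ∀ e ∈ H.edgeSet, v ∈ e → swapc c a b C e = c e := by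
    intro e he hve
    by_cases ch : (c e = a ∨ c e = b) ∧ (∃ u ∈ C, u ∈ e)
    · exact absurd (swap_closed hC he ch.1 ch.2 v hve) hv
    · unfold swapc; rw [if_neg ch]
  ext γ
  constructor
  · rintro ⟨h1, h2, h3⟩
    exact ⟨h1, h2, fun e he hve => (key e he hve) ▸ h3 e he hve⟩
  · rintro ⟨h1, h2, h3⟩
    exact ⟨h1, h2, fun e he hve => (key e he hve).symm ▸ h3 e he hve⟩

lemma swap_missing_mem {H : SimpleGraph V}
    {v : V} (hv : v ∈ C) (hab : a ≠ b) (hb1 : 1 ≤ b) (hb2 : b ≤ Δ)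
    (hmiss : a ∈ missingColors H Δ c v) :
    b ∈ missingColors H Δ (swapc c a b C) v := by
  refine ⟨hb1, hb2, ?_⟩
  intro e he hve
  by_cases ch : (c e = a ∨ c e = b) ∧ (∃ u ∈ C, u ∈ e)
  · have hcea : c e ≠ a := hmiss.2.2 e he hve
    rcases ch.1 with h1 | h1
    · exact absurd h1 hcea
    · rw [swapc_eq_a hab h1 ch.2]; exact fun h => hab h
  · have : swapc c a b C e = c e := by unfold swapc; rw [if_neg ch]
    rw [this]
    intro hceb
    exact ch ⟨Or.inr hceb, v, hv, hve⟩

lemma swap_missing_other {H : SimpleGraph V} {v : V} {γ : ℕ} (hγa : γ ≠ a) (hγb : γ ≠ b) :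
    γ ∈ missingColors H Δ (swapc c a b C) v ↔ γ ∈ missingColors H Δ c v := by
  have key : ∀ e : Sym2 V, (swapc c a b C e ≠ γ ↔ c e ≠ γ) := by
    intro e
    rcases swapc_mem_pair (c := c) (a := a) (b := b) (C := C) (e := e) with h | ⟨h, h2⟩
    · rw [h]
    · constructor
      · intro _ hc2
        rcases h2 with h2 | h2 <;> rw [h2] at hc2
        · exact hγa hc2.symm
        · exact hγb hc2.symm
      · intro _ hs
        rcases h with h | h <;> rw [h] at hs
        · exact hγa hs.symm
        · exact hγb hs.symm
  constructor
  · rintro ⟨h1, h2, h3⟩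
    exact ⟨h1, h2, fun e he hve => (key e).1 (h3 e he hve)⟩
  · rintro ⟨h1, h2, h3⟩
    exact ⟨h1, h2, fun e he hve => (key e).2 (h3 e he hve)⟩

end swapblock

section threeends
variable {V : Type*}

lemma firsthit {Γ : SimpleGraph V} (L : List V) :
    ∀ {u x : V}, Γ.Walk u x → x ∈ L → u ∉ L → ∃ m pre, m ∈ L ∧ pre ∉ L ∧ Γ.Adj pre m := by
  intro u x w
  induction w with
  | nil => intro hx hu; exact absurd hx hu
  | @cons u' v' x' h p ih =>
    intro hx hu
    by_cases hv : v' ∈ L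
    · exact ⟨v', u', hv, hu, h⟩
    · exact ih hx hv

lemma path_interior {Γ : SimpleGraph V} :
    ∀ {x y : V} (p : Γ.Walk x y), p.IsPath → ∀ {z : V}, z ∈ p.support → z ≠ x → z ≠ y →
      ∃ s t, s ≠ t ∧ s ∈ p.support ∧ t ∈ p.support ∧ Γ.Adj z s ∧ Γ.Adj z t := by
  intro x y p
  induction p with
  | nil =>
    intro _ z hz hzx _
    rw [SimpleGraph.Walk.support_nil] at hz
    exact absurd (List.mem_singleton.1 hz) hzx
  | @cons u v y h p ih =>
    intro hp z hz hzx hzy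
    rw [SimpleGraph.Walk.support_cons] at hz
    rcases List.mem_cons.1 hz with rfl | hz'
    · exact absurd rfl hzx
    · by_cases hzv : z = v
      · subst hzv
        obtain ⟨w2, hadj2, q, rfl⟩ := SimpleGraph.Walk.exists_eq_cons_of_ne hzy p
        have hw2 : w2 ∈ (SimpleGraph.Walk.cons hadj2 q).support := by
          rw [SimpleGraph.Walk.support_cons]
          exact List.mem_cons_of_mem _ q.start_mem_support
        have hune : u ≠ w2 := by
          intro hh
          have := (SimpleGraph.Walk.cons_isPath_iff h _).1 hp
          exact this.2 (hh ▸ hw2)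
        refine ⟨u, w2, hune, ?_, ?_, h.symm, hadj2⟩
        · rw [SimpleGraph.Walk.support_cons]; exact List.mem_cons_self
        · rw [SimpleGraph.Walk.support_cons]; exact List.mem_cons_of_mem _ hw2
      · obtain ⟨s, t, hst, hs, ht, h1, h2⟩ :=
          ih ((SimpleGraph.Walk.cons_isPath_iff h p).1 hp).1 hz' hzv hzy
        refine ⟨s, t, hst, ?_, ?_, h1, h2⟩
        · rw [SimpleGraph.Walk.support_cons]; exact List.mem_cons_of_mem _ hs
        · rw [SimpleGraph.Walk.support_cons]; exact List.mem_cons_of_mem _ ht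

lemma three_ends [DecidableEq V] {Γ : SimpleGraph V} {x y z : V} (hxy : x ≠ y) (hxz : x ≠ z) (hyz : y ≠ z)
    (hdeg : ∀ v s t u, Γ.Adj v s → Γ.Adj v t → Γ.Adj v u → s = t ∨ s = u ∨ t = u)
    (hx : ∀ s t, Γ.Adj x s → Γ.Adj x t → s = t)
    (hy : ∀ s t, Γ.Adj y s → Γ.Adj y t → s = t)
    (hz : ∀ s t, Γ.Adj z s → Γ.Adj z t → s = t)
    (hRxy : Γ.Reachable x y) (hRzx : Γ.Reachable z x) : False := by
  obtain ⟨w⟩ := hRxy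
  set P : Γ.Walk x y := (w.toPath : Γ.Path x y).1 with hPdef
  have hP : P.IsPath := (w.toPath : Γ.Path x y).2
  by_cases hzs : z ∈ P.support
  · obtain ⟨s, t, hst, -, -, h1, h2⟩ := path_interior P hP hzs (Ne.symm hxz) (Ne.symm hyz)
    exact hst (hz s t h1 h2)
  · obtain ⟨w2⟩ := hRzx
    obtain ⟨m, pre, hmP, hpreP, hadj⟩ := firsthit P.support w2 P.start_mem_support hzs
    by_cases hmx : m = x
    · subst hmx
      obtain ⟨w1, hadj1, q, hq⟩ := SimpleGraph.Walk.exists_eq_cons_of_ne hxy P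
      have hw1 : w1 ∈ P.support := by
        rw [hq, SimpleGraph.Walk.support_cons]
        exact List.mem_cons_of_mem _ q.start_mem_support
      exact hpreP ((hx pre w1 hadj.symm hadj1) ▸ hw1)
    · by_cases hmy : m = y
      · subst hmy
        obtain ⟨w1, hadj1, q, hq⟩ := SimpleGraph.Walk.exists_eq_cons_of_ne (Ne.symm hxy) P.reverse
        have hw1 : w1 ∈ P.support := by
          have : w1 ∈ P.reverse.support := by
            rw [hq, SimpleGraph.Walk.support_cons]
            exact List.mem_cons_of_mem _ q.start_mem_support
          rwa [SimpleGraph.Walk.support_reverse, List.mem_reverse] at this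
        exact hpreP ((hy pre w1 hadj.symm hadj1) ▸ hw1)
      · obtain ⟨s, t, hst, hs, ht, h1, h2⟩ := path_interior P hP hmP hmx hmy
        rcases hdeg m s t pre h1 h2 hadj.symm with h | h | h
        · exact hst h
        · exact hpreP (h ▸ hs)
        · exact hpreP (h ▸ ht)

end threeends

section chaindeg
variable {V : Type*} [Fintype V] [DecidableEq V] {Δ : ℕ} {G : SimpleGraph V} [DecidableRel G.Adj]
variable {H : SimpleGraph V} {c : Sym2 V → ℕ} {a b : ℕ}

lemma same_color_eq (hc : IsEdgeColoring H Δ c) {v s t : V}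
    (h1 : H.Adj v s) (h2 : H.Adj v t) (hcol : c s(v, s) = c s(v, t)) : s = t := by
  by_contra hst
  have hne : s(v, s) ≠ s(v, t) := fun h => hst (Sym2.congr_right.1 h)
  exact hc.2 _ ((SimpleGraph.mem_edgeSet H).2 h1) _ ((SimpleGraph.mem_edgeSet H).2 h2)
    hne ⟨v, Sym2.mem_mk_left _ _, Sym2.mem_mk_left _ _⟩ hcol

lemma chain_deg2 (hc : IsEdgeColoring H Δ c) :
    ∀ v s t u, (chainGraph H c a b).Adj v s → (chainGraph H c a b).Adj v t →
      (chainGraph H c a b).Adj v u → s = t ∨ s = u ∨ t = u := by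
  intro v s t u h1 h2 h3
  rcases h1.2 with e1 | e1 <;> rcases h2.2 with e2 | e2 <;> rcases h3.2 with e3 | e3
  · exact Or.inl (same_color_eq hc h1.1 h2.1 (e1.trans e2.symm))
  · exact Or.inl (same_color_eq hc h1.1 h2.1 (e1.trans e2.symm))
  · exact Or.inr (Or.inl (same_color_eq hc h1.1 h3.1 (e1.trans e3.symm)))
  · exact Or.inr (Or.inr (same_color_eq hc h2.1 h3.1 (e2.trans e3.symm)))
  · exact Or.inr (Or.inr (same_color_eq hc h2.1 h3.1 (e2.trans e3.symm)))
  · exact Or.inr (Or.inl (same_color_eq hc h1.1 h3.1 (e1.trans e3.symm)))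
  · exact Or.inl (same_color_eq hc h1.1 h2.1 (e1.trans e2.symm))
  · exact Or.inl (same_color_eq hc h1.1 h2.1 (e1.trans e2.symm))

lemma chain_deg1 (hc : IsEdgeColoring H Δ c) {v : V}
    (hmiss : a ∈ missingColors H Δ c v ∨ b ∈ missingColors H Δ c v) :
    ∀ s t, (chainGraph H c a b).Adj v s → (chainGraph H c a b).Adj v t → s = t := by
  intro s t h1 h2
  have k1 : c s(v, s) = c s(v, t) := by
    rcases hmiss with hm | hm
    · have n1 : c s(v, s) ≠ a := hm.2.2 _ ((SimpleGraph.mem_edgeSet H).2 h1.1) (Sym2.mem_mk_left _ _)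
      have n2 : c s(v, t) ≠ a := hm.2.2 _ ((SimpleGraph.mem_edgeSet H).2 h2.1) (Sym2.mem_mk_left _ _)
      rcases h1.2 with e1 | e1
      · exact absurd e1 n1
      · rcases h2.2 with e2 | e2
        · exact absurd e2 n2
        · exact e1.trans e2.symm
    · have n1 : c s(v, s) ≠ b := hm.2.2 _ ((SimpleGraph.mem_edgeSet H).2 h1.1) (Sym2.mem_mk_left _ _)
      have n2 : c s(v, t) ≠ b := hm.2.2 _ ((SimpleGraph.mem_edgeSet H).2 h2.1) (Sym2.mem_mk_left _ _)
      rcases h1.2 with e1 | e1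
      · rcases h2.2 with e2 | e2
        · exact e1.trans e2.symm
        · exact absurd e2 n2
      · exact absurd e1 n1
  exact same_color_eq hc h1.1 h2.1 k1

end chaindeg

section mainlemmas
variable {V : Type*} [Fintype V] [DecidableEq V] {Δ : ℕ} {G : SimpleGraph V} [DecidableRel G.Adj]

/-- L4: endpoints of the uncolored edge are linked in any (a,b)-chain with
`a` missing at `x` and `b` missing at `y`. -/
lemma linked (hclass2 : chromIndex G = Δ + 1) {x y : V} (hf : s(x, y) ∈ G.edgeSet)
    {c : Sym2 V → ℕ} (hc : IsEdgeColoring (G.deleteEdges {s(x, y)}) Δ c) {a b : ℕ}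
    (hax : a ∈ missingColors (G.deleteEdges {s(x, y)}) Δ c x)
    (hby : b ∈ missingColors (G.deleteEdges {s(x, y)}) Δ c y) :
    (chainGraph (G.deleteEdges {s(x, y)}) c a b).Reachable x y := by
  set H := G.deleteEdges {s(x, y)} with hH
  by_contra hreach
  by_cases hab : a = b
  · exact extend_false hclass2 hf hc hax (hab ▸ hby)
  set C : Set V := {u | (chainGraph H c a b).Reachable u x} with hCdef
  have hC : ChainClosed H c a b C := chain_closed_reach H x
  have hxC : x ∈ C := Set.mem_setOf.2 (SimpleGraph.Reachable.refl x)
  have hyC : y ∉ C := fun h => hreach (Set.mem_setOf.1 h).symm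
  have hproper := swap_proper (Δ := Δ) hc hax.1 hax.2.1 hby.1 hby.2.1 hab hC
  have h1 : b ∈ missingColors H Δ (swapc c a b C) x :=
    swap_missing_mem hxC hab hby.1 hby.2.1 hax
  have h2 : b ∈ missingColors H Δ (swapc c a b C) y := by
    rw [swap_missing_of_not_mem (Δ := Δ) hC hyC]
    exact hby
  exact extend_false hclass2 hf hproper h1 h2

variable {H : SimpleGraph V} {c : Sym2 V → ℕ}

/-- recoloring an edge with a color missing at both endpoints is proper. -/
lemma recolor_proper (hc : IsEdgeColoring H Δ c) {y z : V} (hg : s(y, z) ∈ H.edgeSet)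
    {δ : ℕ} (hδy : δ ∈ missingColors H Δ c y) (hδz : δ ∈ missingColors H Δ c z) :
    IsEdgeColoring H Δ (fun e => if e = s(y, z) then δ else c e) := by
  constructor
  · intro e he
    by_cases h : e = s(y, z)
    · simp only [if_pos h]; exact ⟨hδy.1, hδy.2.1⟩
    · simp only [if_neg h]; exact hc.1 e he
  · intro e he g' hg' hne hsh
    obtain ⟨v, hve, hvg⟩ := hsh
    by_cases h1 : e = s(y, z)
    · have h2 : g' ≠ s(y, z) := fun hh => hne (h1.trans hh.symm)
      simp only [if_pos h1, if_neg h2]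
      have hv : v = y ∨ v = z := by subst h1; exact Sym2.mem_iff.1 hve
      rcases hv with rfl | rfl
      · exact fun hh => hδy.2.2 g' hg' hvg hh.symm
      · exact fun hh => hδz.2.2 g' hg' hvg hh.symm
    · by_cases h2 : g' = s(y, z)
      · simp only [if_neg h1, if_pos h2]
        have hv : v = y ∨ v = z := by subst h2; exact Sym2.mem_iff.1 hvg
        rcases hv with rfl | rfl
        · exact hδy.2.2 e he hve
        · exact hδz.2.2 e he hve
      · simp only [if_neg h1, if_neg h2]
        exact hc.2 e he g' hg' hne ⟨v, hve, hvg⟩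

/-- after recoloring edge `g`, its old color is missing at any of its endpoints. -/
lemma recolor_missing_old (hc : IsEdgeColoring H Δ c) {g : Sym2 V} (hg : g ∈ H.edgeSet)
    {y : V} (hyg : y ∈ g) {δ : ℕ} (hδy : δ ∈ missingColors H Δ c y) :
    c g ∈ missingColors H Δ (fun e => if e = g then δ else c e) y := by
  refine ⟨(hc.1 g hg).1, (hc.1 g hg).2, ?_⟩
  intro e he hye
  by_cases h : e = g
  · simp only [if_pos h]
    intro hh
    exact hδy.2.2 g hg hyg hh.symm
  · simp only [if_neg h]
    exact hc.2 e he g hg h ⟨y, hye, hyg⟩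

/-- recoloring an edge does not change missing colors at other vertices. -/
lemma recolor_missing_away {g : Sym2 V} {v : V} (hv : v ∉ g) {δ : ℕ} :
    missingColors H Δ (fun e => if e = g then δ else c e) v = missingColors H Δ c v := by
  have key : ∀ e ∈ H.edgeSet, v ∈ e → (if e = g then δ else c e) = c e := by
    intro e _ hve
    rw [if_neg]
    rintro rfl
    exact hv hve
  ext γ
  constructor
  · rintro ⟨h1, h2, h3⟩
    refine ⟨h1, h2, fun e he hve => ?_⟩
    have h4 : (if e = g then δ else c e) ≠ γ := h3 e he hve
    rwa [key e he hve] at h4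
  · rintro ⟨h1, h2, h3⟩
    refine ⟨h1, h2, fun e he hve => ?_⟩
    show (if e = g then δ else c e) ≠ γ
    rw [key e he hve]
    exact h3 e he hve

/-- L5(i): special case of the p=2 disjointness. -/
lemma L5i (hclass2 : chromIndex G = Δ + 1) {x y z : V}
    (hf : s(x, y) ∈ G.edgeSet) (hzx : z ≠ x) (hzy : z ≠ y)
    (hgG : s(y, z) ∈ G.edgeSet) (hgf : s(y, z) ≠ s(x, y))
    {c : Sym2 V → ℕ} (hc : IsEdgeColoring (G.deleteEdges {s(x, y)}) Δ c)
    (hγ : c s(y, z) ∈ missingColors (G.deleteEdges {s(x, y)}) Δ c x)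
    {δ : ℕ} (hδy : δ ∈ missingColors (G.deleteEdges {s(x, y)}) Δ c y)
    (hδz : δ ∈ missingColors (G.deleteEdges {s(x, y)}) Δ c z) : False := by
  set H := G.deleteEdges {s(x, y)} with hH
  have hgH : s(y, z) ∈ H.edgeSet := mem_del_edgeSet.2 ⟨hgG, hgf⟩
  set c' : Sym2 V → ℕ := fun e => if e = s(y, z) then δ else c e with hc'def
  have hproper : IsEdgeColoring H Δ c' := recolor_proper hc hgH hδy hδz
  have hxy : x ≠ y := G.ne_of_adj ((SimpleGraph.mem_edgeSet G).mp hf)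
  have hxg : x ∉ s(y, z) := by
    rw [Sym2.mem_iff]
    rintro (rfl | rfl)
    · exact hxy rfl
    · exact hzx rfl
  have h1 : c s(y, z) ∈ missingColors H Δ c' x := by
    rw [hc'def, recolor_missing_away hxg]
    exact hγ
  have h2 : c s(y, z) ∈ missingColors H Δ c' y :=
    recolor_missing_old hc hgH (Sym2.mem_mk_left _ _) hδy
  exact extend_false hclass2 hf hproper h1 h2

/-- L5: p=2 Kierstead/multifan disjointness. -/
lemma L5 (hΔ : G.maxDegree = Δ) (hclass2 : chromIndex G = Δ + 1) {x y z : V}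
    (hf : s(x, y) ∈ G.edgeSet) (hzx : z ≠ x) (hzy : z ≠ y)
    (hgG : s(y, z) ∈ G.edgeSet) (hgf : s(y, z) ≠ s(x, y))
    {c : Sym2 V → ℕ} (hc : IsEdgeColoring (G.deleteEdges {s(x, y)}) Δ c)
    (hγ : c s(y, z) ∈ missingColors (G.deleteEdges {s(x, y)}) Δ c x)
    {δ : ℕ} (hδz : δ ∈ missingColors (G.deleteEdges {s(x, y)}) Δ c z)
    (hδxy : δ ∈ missingColors (G.deleteEdges {s(x, y)}) Δ c x ∪
      missingColors (G.deleteEdges {s(x, y)}) Δ c y) : False := by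
  set H := G.deleteEdges {s(x, y)} with hH
  have hgH : s(y, z) ∈ H.edgeSet := mem_del_edgeSet.2 ⟨hgG, hgf⟩
  have hxy : x ≠ y := G.ne_of_adj ((SimpleGraph.mem_edgeSet G).mp hf)
  rcases hδxy with hδx | hδy
  swap
  · exact L5i hclass2 hf hzx hzy hgG hgf hc hγ hδy hδz
  · obtain ⟨τ, hτ⟩ := missing_nonempty hΔ hf (Sym2.mem_mk_right x y) hc
    by_cases hτδ : τ = δ
    · exact L5i hclass2 hf hzx hzy hgG hgf hc hγ (hτδ ▸ hτ) hδz
    have hτδ' : δ ≠ τ := fun h => hτδ h.symm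
    have hlink : (chainGraph H c δ τ).Reachable x y := linked hclass2 hf hc hδx hτ
    by_cases hR : (chainGraph H c δ τ).Reachable z x
    · exact three_ends hxy (fun h => hzx h.symm) (fun h => hzy h.symm)
        (chain_deg2 hc) (chain_deg1 hc (Or.inl hδx)) (chain_deg1 hc (Or.inr hτ))
        (chain_deg1 hc (Or.inl hδz)) hlink hR
    · set C : Set V := {u | (chainGraph H c δ τ).Reachable u z} with hCdef
      have hC : ChainClosed H c δ τ C := chain_closed_reach H z
      have hzC : z ∈ C := Set.mem_setOf.2 (SimpleGraph.Reachable.refl z)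
      have hxC : x ∉ C := fun h => hR (Set.mem_setOf.1 h).symm
      have hyC : y ∉ C := fun h => hR ((hlink.trans (Set.mem_setOf.1 h)).symm)
      set c' := swapc c δ τ C with hc'def
      have hproper : IsEdgeColoring H Δ c' :=
        swap_proper hc hδx.1 hδx.2.1 hτ.1 hτ.2.1 hτδ' hC
      have hτz : τ ∈ missingColors H Δ c' z :=
        swap_missing_mem hzC hτδ' hτ.1 hτ.2.1 hδz
      have hτy : τ ∈ missingColors H Δ c' y := by
        rw [hc'def, swap_missing_of_not_mem (Δ := Δ) hC hyC]
        exact hτ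
      have hgcol : c' s(y, z) = c s(y, z) := by
        rw [hc'def]
        exact swapc_eq_of_not_chain
          (hδz.2.2 _ hgH (Sym2.mem_mk_right y z))
          (hτ.2.2 _ hgH (Sym2.mem_mk_left y z))
      have hγ' : c' s(y, z) ∈ missingColors H Δ c' x := by
        rw [hgcol, hc'def, swap_missing_of_not_mem (Δ := Δ) hC hxC]
        exact hγ
      exact L5i hclass2 hf hzx hzy hgG hgf hproper hγ' hτy hτz

/-- L6: p=3 — the last two vertices have disjoint missing sets. -/
lemma L6 (hΔ : G.maxDegree = Δ) (hclass2 : chromIndex G = Δ + 1) {x y z w : V}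
    (hf : s(x, y) ∈ G.edgeSet) (hzx : z ≠ x) (hzy : z ≠ y)
    (hwx : w ≠ x) (hwy : w ≠ y) (hwz : w ≠ z)
    (hgG : s(y, z) ∈ G.edgeSet) (hgf : s(y, z) ≠ s(x, y))
    (hhG : s(z, w) ∈ G.edgeSet) (hhf : s(z, w) ≠ s(x, y))
    {c : Sym2 V → ℕ} (hc : IsEdgeColoring (G.deleteEdges {s(x, y)}) Δ c)
    (hγ1 : c s(y, z) ∈ missingColors (G.deleteEdges {s(x, y)}) Δ c x)
    (hγ2 : c s(z, w) ∈ missingColors (G.deleteEdges {s(x, y)}) Δ c x ∪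
      missingColors (G.deleteEdges {s(x, y)}) Δ c y)
    {δ : ℕ} (hδz : δ ∈ missingColors (G.deleteEdges {s(x, y)}) Δ c z)
    (hδw : δ ∈ missingColors (G.deleteEdges {s(x, y)}) Δ c w) : False := by
  set H := G.deleteEdges {s(x, y)} with hH
  have hhH : s(z, w) ∈ H.edgeSet := mem_del_edgeSet.2 ⟨hhG, hhf⟩
  set c' : Sym2 V → ℕ := fun e => if e = s(z, w) then δ else c e with hc'def
  have hproper : IsEdgeColoring H Δ c' := recolor_proper hc hhH hδz hδw
  have hxh : x ∉ s(z, w) := by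
    rw [Sym2.mem_iff]; rintro (rfl | rfl)
    · exact hzx rfl
    · exact hwx rfl
  have hyh : y ∉ s(z, w) := by
    rw [Sym2.mem_iff]; rintro (rfl | rfl)
    · exact hzy rfl
    · exact hwy rfl
  have hgh : s(y, z) ≠ s(z, w) := by
    intro hh
    rw [Sym2.eq_iff] at hh
    rcases hh with ⟨h1, h2⟩ | ⟨h1, h2⟩
    · exact hzy h1.symm
    · exact hwy h1.symm
  have hγ2z : c s(z, w) ∈ missingColors H Δ c' z :=
    recolor_missing_old hc hhH (Sym2.mem_mk_left _ _) hδz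
  have hγ2xy : c s(z, w) ∈ missingColors H Δ c' x ∪ missingColors H Δ c' y := by
    rcases hγ2 with h | h
    · left; rw [hc'def, recolor_missing_away hxh]; exact h
    · right; rw [hc'def, recolor_missing_away hyh]; exact h
  have hγ1' : c' s(y, z) ∈ missingColors H Δ c' x := by
    have hcol : c' s(y, z) = c s(y, z) := by rw [hc'def]; simp [hgh]
    rw [hcol, hc'def, recolor_missing_away hxh]
    exact hγ1
  exact L5 hΔ hclass2 hf hzx hzy hgG hgf hproper hγ1' hγ2z hγ2xy

end mainlemmas

section rebase
variable {V : Type*} [Fintype V] [DecidableEq V] {Δ : ℕ} {G : SimpleGraph V} [DecidableRel G.Adj]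

lemma swapc_eq_of_neg {c : Sym2 V → ℕ} {a b : ℕ} {C : Set V} {e : Sym2 V}
    (h : ¬((c e = a ∨ c e = b) ∧ (∃ v ∈ C, v ∈ e))) : swapc c a b C e = c e := by
  unfold swapc
  rw [if_neg h]

/-- an edge with an endpoint outside the closed set is not recolored by the swap. -/
lemma swapc_eq_of_endpoint_not_mem {H : SimpleGraph V} {c : Sym2 V → ℕ} {a b : ℕ} {C : Set V}
    (hC : ChainClosed H c a b C) {e : Sym2 V} (he : e ∈ H.edgeSet) {v : V} (hv : v ∈ e)
    (hvC : v ∉ C) : swapc c a b C e = c e := by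
  apply swapc_eq_of_neg
  rintro ⟨hcol, hex⟩
  exact hvC (swap_closed hC he hcol hex v hv)

/-- symmetric version of `swap_missing_mem`. -/
lemma swap_missing_mem' {H : SimpleGraph V} {c : Sym2 V → ℕ} {a b : ℕ} {C : Set V}
    {v : V} (hv : v ∈ C) (hab : a ≠ b) (ha1 : 1 ≤ a) (ha2 : a ≤ Δ)
    (hmiss : b ∈ missingColors H Δ c v) :
    a ∈ missingColors H Δ (swapc c a b C) v := by
  refine ⟨ha1, ha2, ?_⟩
  intro e he hve
  by_cases ch : (c e = a ∨ c e = b) ∧ (∃ u ∈ C, u ∈ e)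
  · have hceb : c e ≠ b := hmiss.2.2 e he hve
    rcases ch.1 with h1 | h1
    · rw [swapc_eq_b h1 ch.2]; exact fun h => hab h.symm
    · exact absurd h1 hceb
  · rw [swapc_eq_of_neg ch]
    intro hcea
    exact ch ⟨Or.inl hcea, v, hv, hve⟩

variable {x y z : V} {c : Sym2 V → ℕ}

lemma sym2_ne_of {a b c' d : V} (h1 : a ≠ d ∨ b ≠ c') (h2 : a ≠ c' ∨ b ≠ d) :
    s(a, b) ≠ s(c', d) := by
  intro hh
  rcases Sym2.eq_iff.1 hh with ⟨ha, hb⟩ | ⟨ha, hb⟩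
  · rcases h2 with h | h
    · exact h ha
    · exact h hb
  · rcases h1 with h | h
    · exact h ha
    · exact h hb

lemma rebase_proper (hf : s(x, y) ∈ G.edgeSet) (hgG : s(y, z) ∈ G.edgeSet)
    (hgf : s(y, z) ≠ s(x, y)) (hzx : z ≠ x)
    (hc : IsEdgeColoring (G.deleteEdges {s(x, y)}) Δ c)
    (hγ : c s(y, z) ∈ missingColors (G.deleteEdges {s(x, y)}) Δ c x) :
    IsEdgeColoring (G.deleteEdges {s(y, z)}) Δ
      (fun e => if e = s(x, y) then c s(y, z) else c e) := by
  have hgH : s(y, z) ∈ (G.deleteEdges {s(x, y)}).edgeSet := mem_del_edgeSet.2 ⟨hgG, hgf⟩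
  have hmemH : ∀ e ∈ (G.deleteEdges {s(y, z)}).edgeSet, e ≠ s(x, y) →
      e ∈ (G.deleteEdges {s(x, y)}).edgeSet := by
    intro e he hef
    obtain ⟨heG, heg⟩ := mem_del_edgeSet.1 he
    exact mem_del_edgeSet.2 ⟨heG, hef⟩
  constructor
  · intro e he
    by_cases h : e = s(x, y)
    · simp only [if_pos h]
      exact hc.1 _ hgH
    · simp only [if_neg h]
      exact hc.1 e (hmemH e he h)
  · intro e he g' hg' hne hsh
    obtain ⟨v, hve, hvg⟩ := hsh
    by_cases h1 : e = s(x, y)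
    · have h2 : g' ≠ s(x, y) := fun hh => hne (h1.trans hh.symm)
      simp only [if_pos h1, if_neg h2]
      have hgH' : g' ∈ (G.deleteEdges {s(x, y)}).edgeSet := hmemH g' hg' h2
      have hv : v = x ∨ v = y := by subst h1; exact Sym2.mem_iff.1 hve
      rcases hv with h | h
      · exact fun hh => hγ.2.2 g' hgH' (h ▸ hvg) hh.symm
      · have hgg : g' ≠ s(y, z) := (mem_del_edgeSet.1 hg').2
        exact fun hh => hc.2 _ hgH g' hgH' (fun h' => hgg h'.symm)
          ⟨y, Sym2.mem_mk_left _ _, h ▸ hvg⟩ hh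
    · by_cases h2 : g' = s(x, y)
      · simp only [if_neg h1, if_pos h2]
        have heH : e ∈ (G.deleteEdges {s(x, y)}).edgeSet := hmemH e he h1
        have hv : v = x ∨ v = y := by subst h2; exact Sym2.mem_iff.1 hvg
        rcases hv with h | h
        · exact hγ.2.2 e heH (h ▸ hve)
        · have hee : e ≠ s(y, z) := (mem_del_edgeSet.1 he).2
          exact hc.2 e heH _ hgH hee ⟨y, h ▸ hve, Sym2.mem_mk_left _ _⟩
      · simp only [if_neg h1, if_neg h2]
        exact hc.2 e (hmemH e he h1) g' (hmemH g' hg' h2) hne ⟨v, hve, hvg⟩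

lemma rebase_missing_y (hgG : s(y, z) ∈ G.edgeSet) (hgf : s(y, z) ≠ s(x, y))
    (hc : IsEdgeColoring (G.deleteEdges {s(x, y)}) Δ c)
    {δ : ℕ} (hδ : δ ∈ missingColors (G.deleteEdges {s(x, y)}) Δ c y) :
    δ ∈ missingColors (G.deleteEdges {s(y, z)}) Δ
      (fun e => if e = s(x, y) then c s(y, z) else c e) y := by
  have hgH : s(y, z) ∈ (G.deleteEdges {s(x, y)}).edgeSet := mem_del_edgeSet.2 ⟨hgG, hgf⟩
  refine ⟨hδ.1, hδ.2.1, ?_⟩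
  intro e he hye
  by_cases h : e = s(x, y)
  · simp only [if_pos h]
    exact hδ.2.2 _ hgH (Sym2.mem_mk_left _ _)
  · simp only [if_neg h]
    obtain ⟨heG, heg⟩ := mem_del_edgeSet.1 he
    exact hδ.2.2 e (mem_del_edgeSet.2 ⟨heG, h⟩) hye

lemma rebase_missing_away {v : V} (hvf : v ∉ s(x, y)) (hvg : v ∉ s(y, z))
    {δ : ℕ} (hδ : δ ∈ missingColors (G.deleteEdges {s(x, y)}) Δ c v) :
    δ ∈ missingColors (G.deleteEdges {s(y, z)}) Δ
      (fun e => if e = s(x, y) then c s(y, z) else c e) v := by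
  refine ⟨hδ.1, hδ.2.1, ?_⟩
  intro e he hve
  have h : e ≠ s(x, y) := fun hh => hvf (hh ▸ hve)
  simp only [if_neg h]
  obtain ⟨heG, heg⟩ := mem_del_edgeSet.1 he
  exact hδ.2.2 e (mem_del_edgeSet.2 ⟨heG, h⟩) hve

lemma rebase_missing_z (hgG : s(y, z) ∈ G.edgeSet) (hgf : s(y, z) ≠ s(x, y))
    (hzx : z ≠ x) (hzy : z ≠ y)
    (hc : IsEdgeColoring (G.deleteEdges {s(x, y)}) Δ c) :
    c s(y, z) ∈ missingColors (G.deleteEdges {s(y, z)}) Δ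
      (fun e => if e = s(x, y) then c s(y, z) else c e) z := by
  have hgH : s(y, z) ∈ (G.deleteEdges {s(x, y)}).edgeSet := mem_del_edgeSet.2 ⟨hgG, hgf⟩
  refine ⟨(hc.1 _ hgH).1, (hc.1 _ hgH).2, ?_⟩
  intro e he hze
  have h : e ≠ s(x, y) := by
    intro hh
    subst hh
    rcases Sym2.mem_iff.1 hze with rfl | rfl
    · exact hzx rfl
    · exact hzy rfl
  simp only [if_neg h]
  obtain ⟨heG, heg⟩ := mem_del_edgeSet.1 he
  exact fun hh => hc.2 e (mem_del_edgeSet.2 ⟨heG, h⟩) _ hgH heg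
    ⟨z, hze, Sym2.mem_mk_right _ _⟩ hh

/-- KEY1 : if `c e₂` is missing at `v₁`, then nothing missing at `v₃` can be
missing at `v₁` or equal to `c e₁`. -/
lemma KEY1 (hΔ : G.maxDegree = Δ) (hclass2 : chromIndex G = Δ + 1)
    {v0 v1 v2 v3 : V} (h01 : v0 ≠ v1) (h02 : v0 ≠ v2) (h03 : v0 ≠ v3)
    (h12 : v1 ≠ v2) (h13 : v1 ≠ v3) (h23 : v2 ≠ v3)
    (hf : s(v0, v1) ∈ G.edgeSet) (he1 : s(v1, v2) ∈ G.edgeSet) (he2 : s(v2, v3) ∈ G.edgeSet)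
    {c : Sym2 V → ℕ} (hc : IsEdgeColoring (G.deleteEdges {s(v0, v1)}) Δ c)
    (hγ1 : c s(v1, v2) ∈ missingColors (G.deleteEdges {s(v0, v1)}) Δ c v0)
    (hγ2 : c s(v2, v3) ∈ missingColors (G.deleteEdges {s(v0, v1)}) Δ c v1)
    {δ : ℕ} (hδ3 : δ ∈ missingColors (G.deleteEdges {s(v0, v1)}) Δ c v3)
    (hδ : δ ∈ missingColors (G.deleteEdges {s(v0, v1)}) Δ c v1 ∨ δ = c s(v1, v2)) :
    False := by
  have he1f : s(v1, v2) ≠ s(v0, v1) := sym2_ne_of (Or.inr (fun h => h02 h.symm)) (Or.inl (fun h => h01 h.symm))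
  have he2f : s(v2, v3) ≠ s(v0, v1) := sym2_ne_of (Or.inl (fun h => h12 h.symm)) (Or.inl (fun h => h02 h.symm))
  have he2e1 : s(v2, v3) ≠ s(v1, v2) := sym2_ne_of (Or.inr (fun h => h13 h.symm)) (Or.inl (fun h => h12 h.symm))
  -- rebase at e1 with x=v0, y=v1, z=v2
  set c' : Sym2 V → ℕ := fun e => if e = s(v0, v1) then c s(v1, v2) else c e with hc'def
  have hproper : IsEdgeColoring (G.deleteEdges {s(v1, v2)}) Δ c' :=
    rebase_proper hf he1 he1f (fun h => h02 h.symm) hc hγ1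
  have hce2 : c' s(v2, v3) = c s(v2, v3) := by
    rw [hc'def]; simp only [if_neg he2f]
  -- apply L5 to base edge e1 = s(v1,v2) with z := v3
  apply L5 hΔ hclass2 (x := v1) (y := v2) (z := v3) he1 (fun h => h13 h.symm)
    (fun h => h23 h.symm) he2 he2e1 hproper (c := c')
  · -- c' s(v2,v3) missing at v1
    rw [hce2]
    exact rebase_missing_y he1 he1f hc hγ2
  · -- δ missing at v3
    apply rebase_missing_away (x := v0) (y := v1) (z := v2)
    · rw [Sym2.mem_iff]
      rintro (rfl | rfl)
      · exact h03 rfl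
      · exact h13 rfl
    · rw [Sym2.mem_iff]
      rintro (rfl | rfl)
      · exact h13 rfl
      · exact h23 rfl
    · exact hδ3
  · rcases hδ with hδ1 | hδe
    · left
      exact rebase_missing_y he1 he1f hc hδ1
    · right
      rw [hδe]
      exact rebase_missing_z he1 he1f (fun h => h02 h.symm) h12.symm hc

end rebase

section key2
variable {V : Type*} [Fintype V] [DecidableEq V] {Δ : ℕ} {G : SimpleGraph V} [DecidableRel G.Adj]

/-- KEY2: the core configuration is contradictory. -/
lemma KEY2 (hΔ : G.maxDegree = Δ) (hclass2 : chromIndex G = Δ + 1)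
    {v0 v1 v2 v3 : V} (h01 : v0 ≠ v1) (h02 : v0 ≠ v2) (h03 : v0 ≠ v3)
    (h12 : v1 ≠ v2) (h13 : v1 ≠ v3) (h23 : v2 ≠ v3)
    (hf : s(v0, v1) ∈ G.edgeSet) (he1 : s(v1, v2) ∈ G.edgeSet) (he2 : s(v2, v3) ∈ G.edgeSet)
    {c : Sym2 V → ℕ} (hc : IsEdgeColoring (G.deleteEdges {s(v0, v1)}) Δ c)
    (hγ1 : c s(v1, v2) ∈ missingColors (G.deleteEdges {s(v0, v1)}) Δ c v0 ∪
      missingColors (G.deleteEdges {s(v0, v1)}) Δ c v1)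
    (hγ2 : c s(v2, v3) ∈ missingColors (G.deleteEdges {s(v0, v1)}) Δ c v0)
    {a b : ℕ}
    (ha3 : a ∈ missingColors (G.deleteEdges {s(v0, v1)}) Δ c v3)
    (ha0 : a ∈ missingColors (G.deleteEdges {s(v0, v1)}) Δ c v0)
    (hb3 : b ∈ missingColors (G.deleteEdges {s(v0, v1)}) Δ c v3)
    (hb1 : b ∈ missingColors (G.deleteEdges {s(v0, v1)}) Δ c v1) : False := by
  set H := G.deleteEdges {s(v0, v1)} with hH
  have he1f : s(v1, v2) ≠ s(v0, v1) :=
    sym2_ne_of (Or.inr (fun h => h02 h.symm)) (Or.inl (fun h => h01 h.symm))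
  have he2f : s(v2, v3) ≠ s(v0, v1) :=
    sym2_ne_of (Or.inl (fun h => h12 h.symm)) (Or.inl (fun h => h02 h.symm))
  have he2e1 : s(v2, v3) ≠ s(v1, v2) :=
    sym2_ne_of (Or.inr (fun h => h13 h.symm)) (Or.inl (fun h => h12 h.symm))
  have he1H : s(v1, v2) ∈ H.edgeSet := mem_del_edgeSet.2 ⟨he1, he1f⟩
  have he2H : s(v2, v3) ∈ H.edgeSet := mem_del_edgeSet.2 ⟨he2, he2f⟩
  have hγ10 : c s(v1, v2) ∈ missingColors H Δ c v0 := by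
    rcases hγ1 with h | h
    · exact h
    · exact absurd rfl (h.2.2 _ he1H (Sym2.mem_mk_left _ _))
  have hab : a ≠ b := fun h => extend_false hclass2 hf hc ha0 (h ▸ hb1)
  have hγ1b : c s(v1, v2) ≠ b := hb1.2.2 _ he1H (Sym2.mem_mk_left _ _)
  have hγ2a : c s(v2, v3) ≠ a := ha3.2.2 _ he2H (Sym2.mem_mk_right _ _)
  have hγ2b : c s(v2, v3) ≠ b := hb3.2.2 _ he2H (Sym2.mem_mk_right _ _)
  have hγ12 : c s(v1, v2) ≠ c s(v2, v3) :=
    hc.2 _ he1H _ he2H he2e1.symm ⟨v2, Sym2.mem_mk_right _ _, Sym2.mem_mk_left _ _⟩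
  -- Step (3a): the color of e1 is not missing at v3.
  have hγ1not3 : c s(v1, v2) ∉ missingColors H Δ c v3 := by
    intro hγ13
    have hlink : (chainGraph H c (c s(v2, v3)) b).Reachable v0 v1 :=
      linked hclass2 hf hc hγ2 hb1
    by_cases hR : (chainGraph H c (c s(v2, v3)) b).Reachable v3 v0
    · exact three_ends h01 h03 h13 (chain_deg2 hc) (chain_deg1 hc (Or.inl hγ2))
        (chain_deg1 hc (Or.inr hb1)) (chain_deg1 hc (Or.inr hb3)) hlink hR
    · set C : Set V := {u | (chainGraph H c (c s(v2, v3)) b).Reachable u v3} with hCdef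
      have hC : ChainClosed H c (c s(v2, v3)) b C := chain_closed_reach H v3
      have hv3C : v3 ∈ C := Set.mem_setOf.2 (SimpleGraph.Reachable.refl v3)
      have hv0C : v0 ∉ C := fun h => hR (Set.mem_setOf.1 h).symm
      have hv1C : v1 ∉ C := fun h => hR ((hlink.trans (Set.mem_setOf.1 h)).symm)
      have hproper' : IsEdgeColoring H Δ (swapc c (c s(v2, v3)) b C) :=
        swap_proper hc hγ2.1 hγ2.2.1 hb1.1 hb1.2.1 hγ2b hC
      have hc'e1 : swapc c (c s(v2, v3)) b C s(v1, v2) = c s(v1, v2) :=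
        swapc_eq_of_endpoint_not_mem hC he1H (Sym2.mem_mk_left _ _) hv1C
      have hc'e2 : swapc c (c s(v2, v3)) b C s(v2, v3) = b :=
        swapc_eq_b rfl ⟨v3, hv3C, Sym2.mem_mk_right _ _⟩
      have m1 : c s(v1, v2) ∈ missingColors H Δ (swapc c (c s(v2, v3)) b C) v0 := by
        rw [swap_missing_of_not_mem (Δ := Δ) hC hv0C]; exact hγ10
      have m2 : b ∈ missingColors H Δ (swapc c (c s(v2, v3)) b C) v1 := by
        rw [swap_missing_of_not_mem (Δ := Δ) hC hv1C]; exact hb1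
      have m3 : c s(v1, v2) ∈ missingColors H Δ (swapc c (c s(v2, v3)) b C) v3 :=
        (swap_missing_other hγ12 hγ1b).2 hγ13
      exact KEY1 hΔ hclass2 h01 h02 h03 h12 h13 h23 hf he1 he2 hproper'
        (δ := c s(v1, v2)) (by rw [hc'e1]; exact m1) (by rw [hc'e2]; exact m2)
        m3 (Or.inr hc'e1.symm)
  have hba : a ≠ c s(v1, v2) := fun h => hγ1not3 (h ▸ ha3)
  -- Step (3b): swap the whole (γ1, b) chain component of v0.
  have hlink1 : (chainGraph H c (c s(v1, v2)) b).Reachable v0 v1 :=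
    linked hclass2 hf hc hγ10 hb1
  by_cases hR1 : (chainGraph H c (c s(v1, v2)) b).Reachable v3 v0
  · exact three_ends h01 h03 h13 (chain_deg2 hc) (chain_deg1 hc (Or.inl hγ10))
      (chain_deg1 hc (Or.inr hb1)) (chain_deg1 hc (Or.inr hb3)) hlink1 hR1
  set C1 : Set V := {u | (chainGraph H c (c s(v1, v2)) b).Reachable u v0} with hC1def
  have hC1 : ChainClosed H c (c s(v1, v2)) b C1 := chain_closed_reach H v0
  have hv0C1 : v0 ∈ C1 := Set.mem_setOf.2 (SimpleGraph.Reachable.refl v0)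
  have hv1C1 : v1 ∈ C1 := Set.mem_setOf.2 hlink1.symm
  have hv3C1 : v3 ∉ C1 := fun h => hR1 (Set.mem_setOf.1 h)
  set ct := swapc c (c s(v1, v2)) b C1 with hctdef
  have htproper : IsEdgeColoring H Δ ct :=
    swap_proper hc hγ10.1 hγ10.2.1 hb1.1 hb1.2.1 hγ1b hC1
  have F1 : ct s(v1, v2) = b := swapc_eq_b rfl ⟨v1, hv1C1, Sym2.mem_mk_left _ _⟩
  have F2 : ct s(v2, v3) = c s(v2, v3) :=
    swapc_eq_of_endpoint_not_mem hC1 he2H (Sym2.mem_mk_right _ _) hv3C1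
  have F3 : b ∈ missingColors H Δ ct v0 := swap_missing_mem hv0C1 hγ1b hb1.1 hb1.2.1 hγ10
  have F4 : a ∈ missingColors H Δ ct v0 := (swap_missing_other hba hab).2 ha0
  have F5 : c s(v2, v3) ∈ missingColors H Δ ct v0 :=
    (swap_missing_other (fun h => hγ12 h.symm) hγ2b).2 hγ2
  have F6 : c s(v1, v2) ∈ missingColors H Δ ct v1 :=
    swap_missing_mem' hv1C1 hγ1b hγ10.1 hγ10.2.1 hb1
  have F7 : b ∈ missingColors H Δ ct v3 := by
    rw [hctdef, swap_missing_of_not_mem (Δ := Δ) hC1 hv3C1]; exact hb3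
  have F8 : a ∈ missingColors H Δ ct v3 := by
    rw [hctdef, swap_missing_of_not_mem (Δ := Δ) hC1 hv3C1]; exact ha3
  -- Step (3c): swap the (a, γ1) chain component of v3 (w.r.t. ct).
  have hlink2 : (chainGraph H ct a (c s(v1, v2))).Reachable v0 v1 :=
    linked hclass2 hf htproper F4 F6
  by_cases hR2 : (chainGraph H ct a (c s(v1, v2))).Reachable v3 v0
  · exact three_ends h01 h03 h13 (chain_deg2 htproper) (chain_deg1 htproper (Or.inl F4))
      (chain_deg1 htproper (Or.inr F6)) (chain_deg1 htproper (Or.inl F8)) hlink2 hR2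
  set C2 : Set V := {u | (chainGraph H ct a (c s(v1, v2))).Reachable u v3} with hC2def
  have hC2 : ChainClosed H ct a (c s(v1, v2)) C2 := chain_closed_reach H v3
  have hv3C2 : v3 ∈ C2 := Set.mem_setOf.2 (SimpleGraph.Reachable.refl v3)
  have hv0C2 : v0 ∉ C2 := fun h => hR2 (Set.mem_setOf.1 h).symm
  have hv1C2 : v1 ∉ C2 := fun h => hR2 ((hlink2.trans (Set.mem_setOf.1 h)).symm)
  set c2 := swapc ct a (c s(v1, v2)) C2 with hc2def
  have hproper2 : IsEdgeColoring H Δ c2 :=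
    swap_proper htproper F4.1 F4.2.1 F6.1 F6.2.1 hba hC2
  have G1 : c2 s(v1, v2) = b :=
    (swapc_eq_of_endpoint_not_mem hC2 he1H (Sym2.mem_mk_left _ _) hv1C2).trans F1
  have G2 : c2 s(v2, v3) = c s(v2, v3) := by
    have : ct s(v2, v3) ≠ a := by rw [F2]; exact hγ2a
    have h2 : ct s(v2, v3) ≠ c s(v1, v2) := by rw [F2]; exact fun h => hγ12 h.symm
    rw [hc2def, swapc_eq_of_not_chain this h2]; exact F2
  have G3 : c s(v1, v2) ∈ missingColors H Δ c2 v3 :=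
    swap_missing_mem hv3C2 hba F6.1 F6.2.1 F8
  have G4 : b ∈ missingColors H Δ c2 v3 :=
    (swap_missing_other (fun h => hab h.symm) (fun h => hγ1b h.symm)).2 F7
  have G5 : b ∈ missingColors H Δ c2 v0 := by
    rw [hc2def, swap_missing_of_not_mem (Δ := Δ) hC2 hv0C2]; exact F3
  have G6 : c s(v2, v3) ∈ missingColors H Δ c2 v0 := by
    rw [hc2def, swap_missing_of_not_mem (Δ := Δ) hC2 hv0C2]; exact F5
  have G7 : c s(v1, v2) ∈ missingColors H Δ c2 v1 := by
    rw [hc2def, swap_missing_of_not_mem (Δ := Δ) hC2 hv1C2]; exact F6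
  -- Step (3d): swap the (γ2, γ1) chain component of v3 (w.r.t. c2).
  have hlink3 : (chainGraph H c2 (c s(v2, v3)) (c s(v1, v2))).Reachable v0 v1 :=
    linked hclass2 hf hproper2 G6 G7
  by_cases hR3 : (chainGraph H c2 (c s(v2, v3)) (c s(v1, v2))).Reachable v3 v0
  · exact three_ends h01 h03 h13 (chain_deg2 hproper2) (chain_deg1 hproper2 (Or.inl G6))
      (chain_deg1 hproper2 (Or.inr G7)) (chain_deg1 hproper2 (Or.inr G3)) hlink3 hR3
  set C3 : Set V := {u | (chainGraph H c2 (c s(v2, v3)) (c s(v1, v2))).Reachable u v3}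
    with hC3def
  have hC3 : ChainClosed H c2 (c s(v2, v3)) (c s(v1, v2)) C3 := chain_closed_reach H v3
  have hv3C3 : v3 ∈ C3 := Set.mem_setOf.2 (SimpleGraph.Reachable.refl v3)
  have hv0C3 : v0 ∉ C3 := fun h => hR3 (Set.mem_setOf.1 h).symm
  have hv1C3 : v1 ∉ C3 := fun h => hR3 ((hlink3.trans (Set.mem_setOf.1 h)).symm)
  set c3 := swapc c2 (c s(v2, v3)) (c s(v1, v2)) C3 with hc3def
  have hproper3 : IsEdgeColoring H Δ c3 :=
    swap_proper hproper2 G6.1 G6.2.1 G7.1 G7.2.1 (fun h => hγ12 h.symm) hC3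
  have H1 : c3 s(v1, v2) = b :=
    (swapc_eq_of_endpoint_not_mem hC3 he1H (Sym2.mem_mk_left _ _) hv1C3).trans G1
  have H2 : c3 s(v2, v3) = c s(v1, v2) :=
    swapc_eq_b G2 ⟨v3, hv3C3, Sym2.mem_mk_right _ _⟩
  have H3 : b ∈ missingColors H Δ c3 v0 := by
    rw [hc3def, swap_missing_of_not_mem (Δ := Δ) hC3 hv0C3]; exact G5
  have H4 : c s(v1, v2) ∈ missingColors H Δ c3 v1 := by
    rw [hc3def, swap_missing_of_not_mem (Δ := Δ) hC3 hv1C3]; exact G7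
  have H5 : b ∈ missingColors H Δ c3 v3 :=
    (swap_missing_other (fun h => hγ2b h.symm) (fun h => hγ1b h.symm)).2 G4
  exact KEY1 hΔ hclass2 h01 h02 h03 h12 h13 h23 hf he1 he2 hproper3
    (by rw [H1]; exact H3) (by rw [H2]; exact H4) H5 (Or.inr H1.symm)

end key2

section mainproof
variable {V : Type*} [Fintype V] [DecidableEq V]

theorem kierstead_path_four_missing_bound'
    (Δ : ℕ) (G : SimpleGraph V) [DecidableRel G.Adj]
    (hΔ : G.maxDegree = Δ) (hclass2 : chromIndex G = Δ + 1)
    (v₀ v₁ v₂ v₃ : V)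
    (hcrit : IsCriticalEdge G (s(v₀, v₁)))
    (φ : Sym2 V → ℕ)
    (hφ : IsEdgeColoring (G.deleteEdges {s(v₀, v₁)}) Δ φ)
    (hK : IsKiersteadPath G Δ φ [v₀, v₁, v₂, v₃]) :
    (missingColors (G.deleteEdges {s(v₀, v₁)}) Δ φ v₃ ∩
      (missingColors (G.deleteEdges {s(v₀, v₁)}) Δ φ v₀ ∪
        missingColors (G.deleteEdges {s(v₀, v₁)}) Δ φ v₁)).ncard ≤ 1 := by
  set H := G.deleteEdges {s(v₀, v₁)} with hH
  -- distinctness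
  have h01 : v₀ ≠ v₁ := by intro h; subst h; simpa using hK.nodup
  have h02 : v₀ ≠ v₂ := by intro h; subst h; simpa using hK.nodup
  have h03 : v₀ ≠ v₃ := by intro h; subst h; simpa using hK.nodup
  have h12 : v₁ ≠ v₂ := by intro h; subst h; simpa using hK.nodup
  have h13 : v₁ ≠ v₃ := by intro h; subst h; simpa using hK.nodup
  have h23 : v₂ ≠ v₃ := by intro h; subst h; simpa using hK.nodup
  -- edges
  have hf : s(v₀, v₁) ∈ G.edgeSet := hcrit.1
  have he1 : s(v₁, v₂) ∈ G.edgeSet := by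
    have := hK.adj 1 (by norm_num)
    simp only [List.getElem_cons_succ, List.getElem_cons_zero] at this
    exact (SimpleGraph.mem_edgeSet G).2 this
  have he2 : s(v₂, v₃) ∈ G.edgeSet := by
    have := hK.adj 2 (by norm_num)
    simp only [List.getElem_cons_succ, List.getElem_cons_zero] at this
    exact (SimpleGraph.mem_edgeSet G).2 this
  have he1f : s(v₁, v₂) ≠ s(v₀, v₁) :=
    sym2_ne_of (Or.inr (fun h => h02 h.symm)) (Or.inl (fun h => h01 h.symm))
  have he2f : s(v₂, v₃) ≠ s(v₀, v₁) :=
    sym2_ne_of (Or.inl (fun h => h12 h.symm)) (Or.inl (fun h => h02 h.symm))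
  have he1H : s(v₁, v₂) ∈ H.edgeSet := mem_del_edgeSet.2 ⟨he1, he1f⟩
  have he2H : s(v₂, v₃) ∈ H.edgeSet := mem_del_edgeSet.2 ⟨he2, he2f⟩
  -- Kierstead colors
  have hγ10 : φ s(v₁, v₂) ∈ missingColors H Δ φ v₀ := by
    obtain ⟨j, hj, hmem⟩ := hK.color 1 (by norm_num) (by norm_num)
    interval_cases j
    · simpa using hmem
    · exfalso
      simp only [List.getElem_cons_succ, List.getElem_cons_zero] at hmem
      exact hmem.2.2 _ he1H (Sym2.mem_mk_left _ _) rfl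
  have hγ2mem : φ s(v₂, v₃) ∈ missingColors H Δ φ v₀ ∪ missingColors H Δ φ v₁ := by
    obtain ⟨j, hj, hmem⟩ := hK.color 2 (by norm_num) (by norm_num)
    interval_cases j
    · left; simpa using hmem
    · right; simpa using hmem
    · exfalso
      simp only [List.getElem_cons_succ, List.getElem_cons_zero] at hmem
      exact hmem.2.2 _ he2H (Sym2.mem_mk_left _ _) rfl
  -- suppose two colors
  by_contra hcard
  push_neg at hcard
  have hfin : (missingColors H Δ φ v₃ ∩
      (missingColors H Δ φ v₀ ∪ missingColors H Δ φ v₁)).Finite := by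
    apply Set.Finite.subset (Set.finite_Icc 1 Δ)
    intro x hx
    exact Set.mem_Icc.2 ⟨hx.1.1, hx.1.2.1⟩
  obtain ⟨α, β, hα, hβ, hαβ⟩ := (Set.one_lt_ncard_iff hfin).1 hcard
  have hdisj : ∀ γ : ℕ, γ ∈ missingColors H Δ φ v₀ → γ ∈ missingColors H Δ φ v₁ → False :=
    fun γ h h' => extend_false hclass2 hf hφ h h'
  have hγ2α : φ s(v₂, v₃) ≠ α := hα.1.2.2 _ he2H (Sym2.mem_mk_right _ _)
  have hγ2β : φ s(v₂, v₃) ≠ β := hβ.1.2.2 _ he2H (Sym2.mem_mk_right _ _)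
  rcases hγ2mem with hγ20 | hγ21
  · -- γ₂ missing at v₀
    rcases hα.2 with hα0 | hα1 <;> rcases hβ.2 with hβ0 | hβ1
    · -- both at v₀
      obtain ⟨τ, hτ⟩ := missing_nonempty hΔ hf (Sym2.mem_mk_right _ _) hφ
      by_cases hτ3 : τ ∈ missingColors H Δ φ v₃
      · exact KEY2 hΔ hclass2 h01 h02 h03 h12 h13 h23 hf he1 he2 hφ
          (Or.inl hγ10) hγ20 hα.1 hα0 hτ3 hτ
      · have hατ : α ≠ τ := fun h => hdisj α hα0 (h ▸ hτ)
        have hlink : (chainGraph H φ α τ).Reachable v₀ v₁ := linked hclass2 hf hφ hα0 hτ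
        by_cases hR : (chainGraph H φ α τ).Reachable v₃ v₀
        · exact three_ends h01 h03 h13 (chain_deg2 hφ) (chain_deg1 hφ (Or.inl hα0))
            (chain_deg1 hφ (Or.inr hτ)) (chain_deg1 hφ (Or.inl hα.1)) hlink hR
        · set C : Set V := {u | (chainGraph H φ α τ).Reachable u v₃} with hCdef
          have hC : ChainClosed H φ α τ C := chain_closed_reach H v₃
          have hv3C : v₃ ∈ C := Set.mem_setOf.2 (SimpleGraph.Reachable.refl v₃)
          have hv0C : v₀ ∉ C := fun h => hR (Set.mem_setOf.1 h).symm
          have hv1C : v₁ ∉ C := fun h => hR ((hlink.trans (Set.mem_setOf.1 h)).symm)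
          have hproper' : IsEdgeColoring H Δ (swapc φ α τ C) :=
            swap_proper hφ hα0.1 hα0.2.1 hτ.1 hτ.2.1 hατ hC
          have hc'e1 : swapc φ α τ C s(v₁, v₂) = φ s(v₁, v₂) :=
            swapc_eq_of_endpoint_not_mem hC he1H (Sym2.mem_mk_left _ _) hv1C
          have hc'e2 : swapc φ α τ C s(v₂, v₃) = φ s(v₂, v₃) :=
            swapc_eq_of_not_chain hγ2α (fun h => hdisj _ hγ20 (h ▸ hτ))
          exact KEY2 hΔ hclass2 h01 h02 h03 h12 h13 h23 hf he1 he2 hproper'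
            (Or.inl (by rw [hc'e1, swap_missing_of_not_mem (Δ := Δ) hC hv0C]; exact hγ10))
            (by rw [hc'e2, swap_missing_of_not_mem (Δ := Δ) hC hv0C]; exact hγ20)
            ((swap_missing_other (fun h => hαβ (h.symm)) (fun h => hdisj β hβ0 (h ▸ hτ))).2 hβ.1)
            (by rw [swap_missing_of_not_mem (Δ := Δ) hC hv0C]; exact hβ0)
            (swap_missing_mem hv3C hατ hτ.1 hτ.2.1 hα.1)
            (by rw [swap_missing_of_not_mem (Δ := Δ) hC hv1C]; exact hτ)
    · exact KEY2 hΔ hclass2 h01 h02 h03 h12 h13 h23 hf he1 he2 hφ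
        (Or.inl hγ10) hγ20 hα.1 hα0 hβ.1 hβ1
    · exact KEY2 hΔ hclass2 h01 h02 h03 h12 h13 h23 hf he1 he2 hφ
        (Or.inl hγ10) hγ20 hβ.1 hβ0 hα.1 hα1
    · -- both at v₁
      obtain ⟨τ, hτ⟩ := missing_nonempty hΔ hf (Sym2.mem_mk_left _ _) hφ
      by_cases hτ3 : τ ∈ missingColors H Δ φ v₃
      · exact KEY2 hΔ hclass2 h01 h02 h03 h12 h13 h23 hf he1 he2 hφ
          (Or.inl hγ10) hγ20 hτ3 hτ hα.1 hα1
      · have hτβ : τ ≠ β := fun h => hdisj τ hτ (h ▸ hβ1)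
        have hατ : α ≠ τ := fun h => hdisj α (h ▸ hτ) hα1
        have hlink : (chainGraph H φ τ β).Reachable v₀ v₁ := linked hclass2 hf hφ hτ hβ1
        by_cases hR : (chainGraph H φ τ β).Reachable v₃ v₀
        · exact three_ends h01 h03 h13 (chain_deg2 hφ) (chain_deg1 hφ (Or.inl hτ))
            (chain_deg1 hφ (Or.inr hβ1)) (chain_deg1 hφ (Or.inr hβ.1)) hlink hR
        · set C : Set V := {u | (chainGraph H φ τ β).Reachable u v₃} with hCdef
          have hC : ChainClosed H φ τ β C := chain_closed_reach H v₃
          have hv3C : v₃ ∈ C := Set.mem_setOf.2 (SimpleGraph.Reachable.refl v₃)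
          have hv0C : v₀ ∉ C := fun h => hR (Set.mem_setOf.1 h).symm
          have hv1C : v₁ ∉ C := fun h => hR ((hlink.trans (Set.mem_setOf.1 h)).symm)
          have hproper' : IsEdgeColoring H Δ (swapc φ τ β C) :=
            swap_proper hφ hτ.1 hτ.2.1 hβ1.1 hβ1.2.1 hτβ hC
          have hc'e1 : swapc φ τ β C s(v₁, v₂) = φ s(v₁, v₂) :=
            swapc_eq_of_endpoint_not_mem hC he1H (Sym2.mem_mk_left _ _) hv1C
          have hαM3 : α ∈ missingColors H Δ (swapc φ τ β C) v₃ :=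
            (swap_missing_other hατ hαβ).2 hα.1
          have hαM1 : α ∈ missingColors H Δ (swapc φ τ β C) v₁ := by
            rw [swap_missing_of_not_mem (Δ := Δ) hC hv1C]; exact hα1
          by_cases hγ2τ : φ s(v₂, v₃) = τ
          · have hc'e2 : swapc φ τ β C s(v₂, v₃) = β :=
              swapc_eq_b hγ2τ ⟨v₃, hv3C, Sym2.mem_mk_right _ _⟩
            exact KEY1 hΔ hclass2 h01 h02 h03 h12 h13 h23 hf he1 he2 hproper'
              (δ := α)
              (by rw [hc'e1, swap_missing_of_not_mem (Δ := Δ) hC hv0C]; exact hγ10)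
              (by rw [hc'e2, swap_missing_of_not_mem (Δ := Δ) hC hv1C]; exact hβ1)
              hαM3 (Or.inl hαM1)
          · have hc'e2 : swapc φ τ β C s(v₂, v₃) = φ s(v₂, v₃) :=
              swapc_eq_of_not_chain hγ2τ hγ2β
            exact KEY2 hΔ hclass2 h01 h02 h03 h12 h13 h23 hf he1 he2 hproper'
              (Or.inl (by rw [hc'e1, swap_missing_of_not_mem (Δ := Δ) hC hv0C]; exact hγ10))
              (by rw [hc'e2, swap_missing_of_not_mem (Δ := Δ) hC hv0C]; exact hγ20)
              (swap_missing_mem' hv3C hτβ hτ.1 hτ.2.1 hβ.1)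
              (by rw [swap_missing_of_not_mem (Δ := Δ) hC hv0C]; exact hτ)
              hαM3 hαM1
  · -- γ₂ missing at v₁
    have hkill : ∀ δ : ℕ, δ ∈ missingColors H Δ φ v₃ → δ ∈ missingColors H Δ φ v₁ → False :=
      fun δ h3 h1 => KEY1 hΔ hclass2 h01 h02 h03 h12 h13 h23 hf he1 he2 hφ
        hγ10 hγ21 h3 (Or.inl h1)
    have hγ1n3 : φ s(v₁, v₂) ∉ missingColors H Δ φ v₃ :=
      fun h => KEY1 hΔ hclass2 h01 h02 h03 h12 h13 h23 hf he1 he2 hφ hγ10 hγ21 h (Or.inr rfl)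
    have hα0 : α ∈ missingColors H Δ φ v₀ := by
      rcases hα.2 with h | h
      · exact h
      · exact absurd (hkill α hα.1 h) not_false
    have hβ0 : β ∈ missingColors H Δ φ v₀ := by
      rcases hβ.2 with h | h
      · exact h
      · exact absurd (hkill β hβ.1 h) not_false
    have hαγ2' : α ≠ φ s(v₂, v₃) := fun h => hγ2α h.symm
    have hlink : (chainGraph H φ α (φ s(v₂, v₃))).Reachable v₀ v₁ :=
      linked hclass2 hf hφ hα0 hγ21
    by_cases hR : (chainGraph H φ α (φ s(v₂, v₃))).Reachable v₃ v₀
    · exact three_ends h01 h03 h13 (chain_deg2 hφ) (chain_deg1 hφ (Or.inl hα0))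
        (chain_deg1 hφ (Or.inr hγ21)) (chain_deg1 hφ (Or.inl hα.1)) hlink hR
    · set C : Set V := {u | (chainGraph H φ α (φ s(v₂, v₃))).Reachable u v₃} with hCdef
      have hC : ChainClosed H φ α (φ s(v₂, v₃)) C := chain_closed_reach H v₃
      have hv3C : v₃ ∈ C := Set.mem_setOf.2 (SimpleGraph.Reachable.refl v₃)
      have hv0C : v₀ ∉ C := fun h => hR (Set.mem_setOf.1 h).symm
      have hv1C : v₁ ∉ C := fun h => hR ((hlink.trans (Set.mem_setOf.1 h)).symm)
      have hproper' : IsEdgeColoring H Δ (swapc φ α (φ s(v₂, v₃)) C) :=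
        swap_proper hφ hα0.1 hα0.2.1 hγ21.1 hγ21.2.1 hαγ2' hC
      have hc'e1 : swapc φ α (φ s(v₂, v₃)) C s(v₁, v₂) = φ s(v₁, v₂) :=
        swapc_eq_of_endpoint_not_mem hC he1H (Sym2.mem_mk_left _ _) hv1C
      have hc'e2 : swapc φ α (φ s(v₂, v₃)) C s(v₂, v₃) = α :=
        swapc_eq_a hαγ2' rfl ⟨v₃, hv3C, Sym2.mem_mk_right _ _⟩
      exact KEY2 hΔ hclass2 h01 h02 h03 h12 h13 h23 hf he1 he2 hproper'
        (Or.inl (by rw [hc'e1, swap_missing_of_not_mem (Δ := Δ) hC hv0C]; exact hγ10))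
        (by rw [hc'e2, swap_missing_of_not_mem (Δ := Δ) hC hv0C]; exact hα0)
        ((swap_missing_other (fun h => hαβ h.symm) (fun h => hγ2β h.symm)).2 hβ.1)
        (by rw [swap_missing_of_not_mem (Δ := Δ) hC hv0C]; exact hβ0)
        (swap_missing_mem hv3C hαγ2' hγ21.1 hγ21.2.1 hα.1)
        (by rw [swap_missing_of_not_mem (Δ := Δ) hC hv1C]; exact hγ21)

end mainproof
end KPwork

/-- Let `G` be a Class 2 graph with maximum degree `Δ`, `e = v₀v₁` a
critical edge, and `φ ∈ C^Δ(G-e)`. If `K = (v₀, v₀v₁, v₁, v₁v₂, v₂, v₂v₃, v₃)` is a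
Kierstead path with respect to `e` and `φ`, then `|φ̄(v₃) ∩ (φ̄(v₀) ∪ φ̄(v₁))| ≤ 1`. -/
theorem kierstead_path_four_missing_bound
    {V : Type*} [Fintype V] [DecidableEq V]
    (Δ : ℕ) (G : SimpleGraph V) [DecidableRel G.Adj]
    (hΔ : G.maxDegree = Δ) (hclass2 : chromIndex G = Δ + 1)
    (v₀ v₁ v₂ v₃ : V)
    (hcrit : IsCriticalEdge G (s(v₀, v₁)))
    (φ : Sym2 V → ℕ)
    (hφ : IsEdgeColoring (G.deleteEdges {s(v₀, v₁)}) Δ φ)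
    (hK : IsKiersteadPath G Δ φ [v₀, v₁, v₂, v₃]) :
    (missingColors (G.deleteEdges {s(v₀, v₁)}) Δ φ v₃ ∩
      (missingColors (G.deleteEdges {s(v₀, v₁)}) Δ φ v₀ ∪
        missingColors (G.deleteEdges {s(v₀, v₁)}) Δ φ v₁)).ncard ≤ 1 := by
  exact KPwork.kierstead_path_four_missing_bound' Δ G hΔ hclass2 v₀ v₁ v₂ v₃ hcrit φ hφ hK
end
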